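/- arXiv:1702.05797 — 3 statements merged into one kernel-verified Lean document; each statement's English description precedes it below -/
import Mathlib

section
/- Let V be a finite vertex set, p ∈ (0,1), q > 0 a real number, and α ∈ (0,1). Let ω be a random edge configuration on V distributed according to the FK measure on V with edge probability p and cluster weight q. Independently color each cluster of ω red with probability α, and let R be the set of all red vertices. Then, conditionally on R, the restriction of ω to edges within R and the restriction of ω to edges within V∖R are independent, with ω restricted to R distributed according to the FK measure on R with edge probability p and cluster weight αq, and ω restricted to V∖R distributed according to the FK measure on V∖R with edge probability p and cluster weight (1−α)q. -/
open scoped Classical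

noncomputable section

/-- The type of potential edges (unordered pairs of distinct vertices) on vertex set `V`. -/
abbrev EdgeT (V : Type*) := {e : Sym2 V // ¬ e.IsDiag}

/-- An edge configuration on vertex set `V`: a set of edges of the complete graph on `V`. -/
abbrev Conf (V : Type*) [DecidableEq V] := Finset (EdgeT V)

variable {V : Type*} [DecidableEq V]

/-- The graph associated to an edge configuration. -/
def graphOf (ω : Conf V) : SimpleGraph V :=
  SimpleGraph.fromEdgeSet (Subtype.val '' (ω : Set (EdgeT V)))

/-- The size of the cluster (connected component) of the vertex `x`. -/
def clusterSize (ω : Conf V) (x : V) : ℕ :=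
  Nat.card {y | (graphOf ω).Reachable x y}

/-- The number of clusters (connected components) of an edge configuration. -/
def numClusters (ω : Conf V) : ℕ :=
  Nat.card (graphOf ω).ConnectedComponent

/-- The number of clusters of `ω` meeting the vertex set `A`. -/
def numClustersIn (ω : Conf V) (A : Set V) : ℕ :=
  Nat.card {C : (graphOf ω).ConnectedComponent | ∃ x ∈ A, (graphOf ω).connectedComponentMk x = C}

variable [Fintype V]

/-- `ℒ₁(ω)`: the size of the largest cluster. -/
def L1 (ω : Conf V) : ℕ :=
  Finset.univ.sup (fun x => clusterSize ω x)

/-- `|S_M(ω)|`: the number of vertices in clusters of size larger than `M`. -/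
def SMcard (ω : Conf V) (M : ℝ) : ℕ :=
  (Finset.univ.filter (fun x => (clusterSize ω x : ℝ) > M)).card

/-- `|S_M(ω) ∖ 𝒞₁(ω)|`: the number of vertices in clusters of size larger than `M`,
excluding a largest cluster.  (If the largest cluster has size `> M` it is contained
in `S_M`, so this number is `|S_M| - ℒ₁`; otherwise it is `|S_M|`.) -/
def SMminusC1card (ω : Conf V) (M : ℝ) : ℕ :=
  if (L1 ω : ℝ) > M then SMcard ω M - L1 ω else SMcard ω M

/-- The FK (random-cluster) weight of a configuration, with edge probability `p`
and cluster weight `q`. -/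
def fkWeight (V : Type*) [DecidableEq V] [Fintype V] (p q : ℝ) (ω : Conf V) : ℝ :=
  p ^ ω.card * (1 - p) ^ (Fintype.card (EdgeT V) - ω.card) * q ^ numClusters ω

/-- The probability of the event `A` under the (normalized) weight function `w`. -/
def probOf {Ω : Type*} [Fintype Ω] (w : Ω → ℝ) (A : Set Ω) : ℝ :=
  (∑ x ∈ Finset.univ.filter (· ∈ A), w x) / (∑ x, w x)

/-- Conditional probability of `A` given `B` under the weight function `w`. -/
def condProbOf {Ω : Type*} [Fintype Ω] (w : Ω → ℝ) (A B : Set Ω) : ℝ :=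
  probOf w (A ∩ B) / probOf w B

/-- The mean-field FK measure `π_{n,λ,q}` (with `p = λ/n`), evaluated on the event `A`. -/
def fkProb (n : ℕ) (p q : ℝ) (A : Set (Conf (Fin n))) : ℝ :=
  probOf (fkWeight (Fin n) p q) A

/-- `λ_S = q`. -/
def lambdaS (q : ℝ) : ℝ := q

/-- `λ_c = 2(q-1)log(q-1)/(q-2)`. -/
def lambdac (q : ℝ) : ℝ := 2 * (q - 1) * Real.log (q - 1) / (q - 2)

/-- `λ_s = min_{z ≥ 0} { z + qz/(eᶻ - 1) }` (the infimum over `z > 0` of the natural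
continuous extension). -/
def lambdas (q : ℝ) : ℝ := sInf ((fun z => z + q * z / (Real.exp z - 1)) '' Set.Ioi 0)

/-- `θ_λ`: the unique positive root of `e^{-λx} = 1 - x` for `λ > 1` (and `0` for `λ ≤ 1`,
where the set of positive roots is empty and `sSup ∅ = 0`). -/
def thetaRoot (lam : ℝ) : ℝ := sSup {x : ℝ | 0 < x ∧ Real.exp (-lam * x) = 1 - x}

/-- `Θ_r(λ,q)`: the largest solution of `e^{-λx} = 1 - qx/(1+(q-1)x)`. -/
def ThetaR (lam q : ℝ) : ℝ :=
  sSup {x : ℝ | Real.exp (-lam * x) = 1 - q * x / (1 + (q - 1) * x)}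

/-- `t`-step transition probabilities of the transition kernel `P`. -/
def kernelPow {Ω : Type*} [Fintype Ω] [DecidableEq Ω] (P : Ω → Ω → ℝ) : ℕ → Ω → Ω → ℝ
  | 0 => fun x y => if x = y then 1 else 0
  | t + 1 => fun x y => ∑ z, kernelPow P t x z * P z y

/-- Total variation distance between two (signed) distributions. -/
def tvDist {Ω : Type*} [Fintype Ω] (μ ν : Ω → ℝ) : ℝ := (∑ x, |μ x - ν x|) / 2

/-- The distribution obtained by normalizing the weight function `w`. -/
def statDist {Ω : Type*} [Fintype Ω] (w : Ω → ℝ) : Ω → ℝ := fun x => w x / ∑ y, w y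

/-- The mixing time `t_mix = min { t : max_x ‖Pᵗ(x,·) - π‖_TV < 1/(2e) }`. -/
def mixingTime {Ω : Type*} [Fintype Ω] [DecidableEq Ω] (P : Ω → Ω → ℝ) (π : Ω → ℝ) : ℕ :=
  sInf {t : ℕ | ∀ x, tvDist (kernelPow P t x) π < 1 / (2 * Real.exp 1)}

/-- The mean-field Potts weight: `σ ↦ exp((β/n)·#{i<j : σ_i = σ_j})` where
`β/n = -log(1 - λ/n)`, i.e. `λ/n = 1 - e^{-β/n}`. -/
def pottsWeight (n q : ℕ) (lam : ℝ) (σ : Fin n → Fin q) : ℝ :=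
  Real.exp (-(Real.log (1 - lam / n)) *
    ((Finset.univ.filter (fun ij : Fin n × Fin n => ij.1 < ij.2 ∧ σ ij.1 = σ ij.2)).card))

/-- The number of sites of color `r` in the Potts configuration `σ`. -/
def colorCount {n q : ℕ} (σ : Fin n → Fin q) (r : Fin q) : ℕ :=
  (Finset.univ.filter (fun i => σ i = r)).card

/-- A function on vertices is constant on each cluster of `ω`. -/
def constOnClusters {γ : Type*} (ω : Conf V) (f : V → γ) : Prop :=
  ∀ x y, (graphOf ω).Reachable x y → f x = f y

/-- The monochromatic edges of a Potts configuration. -/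
def monoEdges {n q : ℕ} (σ : Fin n → Fin q) : Finset (EdgeT (Fin n)) :=
  Finset.univ.filter (fun e => ∀ x ∈ e.1, ∀ y ∈ e.1, σ x = σ y)

/-- Transition kernel of the Swendsen–Wang dynamics for the mean-field `q`-state
Potts model: retain each monochromatic edge independently with probability `p`, then
recolor each cluster with an independent uniform color. -/
def swKernel (n q : ℕ) (p : ℝ) (σ σ' : Fin n → Fin q) : ℝ :=
  ∑ ω ∈ (monoEdges σ).powerset,
    p ^ ω.card * (1 - p) ^ ((monoEdges σ).card - ω.card) *
      (if constOnClusters ω σ' then ((1 : ℝ) / q) ^ numClusters ω else 0)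

/-- Transition kernel of heat-bath Glauber dynamics for the mean-field FK model:
a uniformly random edge is resampled from its conditional distribution given the rest. -/
def glauberKernel (n : ℕ) (p q : ℝ) (ω ω' : Conf (Fin n)) : ℝ :=
  (1 / (Fintype.card (EdgeT (Fin n)) : ℝ)) * ∑ e : EdgeT (Fin n),
    if ω'.erase e = ω.erase e then
      fkWeight (Fin n) p q ω' /
        (fkWeight (Fin n) p q (insert e (ω'.erase e)) + fkWeight (Fin n) p q (ω'.erase e))
    else 0

/-- The edge `e` has both endpoints in the vertex set `A`. -/
def edgeInside (A : Set V) (e : EdgeT V) : Prop := ∀ x ∈ e.1, x ∈ A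

/-- Transition kernel of the Chayes–Machta dynamics for the mean-field FK model:
each cluster is activated independently with probability `1/q`, and every edge with
both endpoints in active clusters is resampled with probability `p`. -/
def cmKernel (n : ℕ) (p q : ℝ) (ω ω' : Conf (Fin n)) : ℝ :=
  ∑ A ∈ (Finset.univ : Finset (Fin n)).powerset,
    if (∀ x ∈ A, ∀ y : Fin n, (graphOf ω).Reachable x y → y ∈ A) ∧
       (∀ e : EdgeT (Fin n), ¬ edgeInside (↑A) e → (e ∈ ω' ↔ e ∈ ω)) then
      (1 / q) ^ numClustersIn ω (↑A) * (1 - 1 / q) ^ numClustersIn ω ((↑A : Set (Fin n))ᶜ) *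
      p ^ (ω'.filter (fun e => edgeInside (↑A : Set (Fin n)) e)).card *
      (1 - p) ^ ((Finset.univ.filter (fun e : EdgeT (Fin n) => edgeInside (↑A : Set (Fin n)) e)).card
            - (ω'.filter (fun e => edgeInside (↑A : Set (Fin n)) e)).card)
    else 0

/-- The restriction of an edge configuration on `V` to the vertex subset `R`. -/
def restrictConf (R : Finset V) (ω : Conf V) : Conf ↥R :=
  Finset.univ.filter (fun e : EdgeT ↥R => ∃ e' ∈ ω, e'.1 = Sym2.map Subtype.val e.1)

/-- Weight of a red/blue coloring of the clusters of `ω`: each cluster is red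
independently with probability `α`. -/
def colorWeight (ω : Conf V) (α : ℝ) (c : V → Bool) : ℝ :=
  if constOnClusters ω c then
    α ^ numClustersIn ω {x | c x = true} * (1 - α) ^ numClustersIn ω {x | c x = false}
  else 0

/-- The set of red vertices of a coloring. -/
def redSet (c : V → Bool) : Finset V := Finset.univ.filter (fun x => c x = true)

/-- The mean-field Potts drift function
`F_λ(z) = z·θ_{λz} + (1/q)(1 - z·θ_{λz})` for `z > 1/λ`, and `1/q` for `z ≤ 1/λ`. -/
def Fdrift (q : ℕ) (lam : ℝ) (z : ℝ) : ℝ :=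
  if 1 / lam < z then
    z * thetaRoot (lam * z) + ((1 : ℝ) / q) * (1 - z * thetaRoot (lam * z))
  else (1 : ℝ) / q

/-- `a_λ`: the largest fixed point of `F_λ`. -/
def aFix (q : ℕ) (lam : ℝ) : ℝ := sSup {a : ℝ | Fdrift q lam a = a}

/-- `f(θ) = θ_{λ(1+(q-1)θ)/q}`, the Chayes–Machta drift of the giant component. -/
def fdrift (q lam θ : ℝ) : ℝ := thetaRoot (lam * (1 + (q - 1) * θ) / q)

/-- `g(θ) = f(θ) - θ`. -/
def gdrift (q lam θ : ℝ) : ℝ := fdrift q lam θ - θ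

/-- `Θ_min = max{0, (q-λ)/(λ(q-1))}`. -/
def ThetaMin (q lam : ℝ) : ℝ := max 0 ((q - lam) / (lam * (q - 1)))

/-- `Θ*`: the smaller of the two roots of `g` in `(Θ_min, 1]`. -/
def ThetaStar (q lam : ℝ) : ℝ :=
  sInf {θ : ℝ | θ ∈ Set.Ioc (ThetaMin q lam) 1 ∧ gdrift q lam θ = 0}

end

set_option linter.unusedSectionVars false
set_option maxHeartbeats 1000000

noncomputable section BGJ
open SimpleGraph

variable {V : Type*} [DecidableEq V]

lemma BGJ.isDiag_map_iff {α β : Type*} {f : α → β} (hf : Function.Injective f) (z : Sym2 α) :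
    (z.map f).IsDiag ↔ z.IsDiag := by
  induction z using Sym2.ind with
  | _ a b => simp [Sym2.mk_isDiag_iff, hf.eq_iff]

lemma BGJ.sym2_exists_mem {α : Type*} (z : Sym2 α) : ∃ a, a ∈ z := by
  induction z using Sym2.ind with
  | _ a b => exact ⟨a, Sym2.mem_mk_left a b⟩

/-- Lift an edge on the subtype `↥S` to an edge on `V`. -/
def liftEdge (S : Finset V) (e : EdgeT ↥S) : EdgeT V :=
  ⟨e.1.map Subtype.val, by
    rw [BGJ.isDiag_map_iff Subtype.val_injective]; exact e.2⟩

lemma liftEdge_injective (S : Finset V) : Function.Injective (liftEdge S) := by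
  intro a b h
  exact Subtype.ext (Sym2.map.injective Subtype.val_injective (congrArg Subtype.val h))

lemma mem_of_mem_liftEdge {S : Finset V} {e : EdgeT ↥S} {x : V}
    (hx : x ∈ (liftEdge S e).1) : x ∈ S := by
  obtain ⟨a, _, rfl⟩ := Sym2.mem_map.mp hx
  exact a.2

lemma liftEdge_inside (S : Finset V) (e : EdgeT ↥S) : edgeInside (↑S) (liftEdge S e) :=
  fun _ hx => mem_of_mem_liftEdge hx

/-- Combine configurations on `R` and on `Rᶜ` into a configuration on `V`. -/
def joinConf [Fintype V] (R : Finset V) (ω₁ : Conf ↥R) (ω₂ : Conf ↥(Rᶜ)) : Conf V :=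
  ω₁.image (liftEdge R) ∪ ω₂.image (liftEdge Rᶜ)

variable [Fintype V]

lemma BGJ.map_val_eq_iff {S : Finset V} (z : Sym2 ↥S) (x y : V) :
    z.map Subtype.val = s(x, y) ↔ ∃ a b : ↥S, z = s(a, b) ∧ (a : V) = x ∧ (b : V) = y := by
  induction z using Sym2.ind with
  | _ a b =>
    simp only [Sym2.map_pair_eq, Sym2.eq_iff]
    constructor
    · rintro (⟨rfl, rfl⟩ | ⟨rfl, rfl⟩)
      · exact ⟨a, b, Or.inl ⟨rfl, rfl⟩, rfl, rfl⟩
      · exact ⟨b, a, Or.inr ⟨rfl, rfl⟩, rfl, rfl⟩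
    · rintro ⟨a', b', (⟨rfl, rfl⟩ | ⟨rfl, rfl⟩), rfl, rfl⟩
      · exact Or.inl ⟨rfl, rfl⟩
      · exact Or.inr ⟨rfl, rfl⟩

/-- The subtype-val embedding of a Finset. -/
def valEmb (S : Finset V) : ↥S ↪ V := ⟨Subtype.val, Subtype.val_injective⟩

lemma graphOf_adj (ω : Conf V) (x y : V) :
    (graphOf ω).Adj x y ↔ (∃ e ∈ ω, (e : EdgeT V).1 = s(x, y)) ∧ x ≠ y := by
  rw [graphOf, SimpleGraph.fromEdgeSet_adj]
  simp [Set.mem_image]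

lemma graphOf_image_lift (S : Finset V) (ω : Conf ↥S) :
    graphOf (ω.image (liftEdge S)) = (graphOf ω).map (valEmb S) := by
  ext x y
  rw [graphOf_adj, SimpleGraph.map_adj]
  constructor
  · rintro ⟨⟨e', he', h1⟩, hxy⟩
    obtain ⟨e, he, rfl⟩ := Finset.mem_image.mp he'
    obtain ⟨a, b, hab, ha, hb⟩ := (BGJ.map_val_eq_iff e.1 x y).mp h1
    refine ⟨a, b, (graphOf_adj ω a b).mpr ⟨⟨e, he, hab⟩, ?_⟩, ha, hb⟩
    rintro rfl
    exact hxy (ha ▸ hb ▸ rfl)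
  · rintro ⟨a, b, hadj, rfl, rfl⟩
    obtain ⟨⟨e, he, h1⟩, hne⟩ := (graphOf_adj ω a b).mp hadj
    refine ⟨⟨liftEdge S e, Finset.mem_image_of_mem _ he, ?_⟩,
      fun h => hne (Subtype.val_injective h)⟩
    show (e : Sym2 ↥S).map Subtype.val = _
    rw [h1, Sym2.map_pair_eq]
    rfl

lemma graphOf_union (a b : Conf V) : graphOf (a ∪ b) = graphOf a ⊔ graphOf b := by
  rw [graphOf, Finset.coe_union, Set.image_union, SimpleGraph.fromEdgeSet_union]
  rfl

lemma graphOf_joinConf (R : Finset V) (ω₁ : Conf ↥R) (ω₂ : Conf ↥(Rᶜ)) :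
    graphOf (joinConf R ω₁ ω₂) =
      (graphOf ω₁).map (valEmb R) ⊔ (graphOf ω₂).map (valEmb Rᶜ) := by
  rw [joinConf, graphOf_union, graphOf_image_lift, graphOf_image_lift]

/-- In a separated sup, walks starting in `Rs` stay in `Rs` and use only `G₁`. -/
lemma BGJ.reach_sup {G₁ G₂ : SimpleGraph V} {Rs : Set V}
    (h₁ : ∀ ⦃x y : V⦄, G₁.Adj x y → x ∈ Rs) (h₂ : ∀ ⦃x y : V⦄, G₂.Adj x y → x ∉ Rs) :
    ∀ {x y : V}, (G₁ ⊔ G₂).Reachable x y → x ∈ Rs → G₁.Reachable x y ∧ y ∈ Rs := by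
  have key : ∀ {x y : V}, (G₁ ⊔ G₂).Walk x y → x ∈ Rs → G₁.Reachable x y ∧ y ∈ Rs := by
    intro x y w
    induction w with
    | nil => exact fun hx => ⟨Reachable.refl _, hx⟩
    | cons h p ih =>
      intro hx
      rcases (SimpleGraph.sup_adj _ _ _ _).mp h with h' | h'
      · obtain ⟨r, hy⟩ := ih (h₁ h'.symm)
        exact ⟨(h'.reachable).trans r, hy⟩
      · exact absurd hx (h₂ h')
  intro x y h hx
  obtain ⟨w⟩ := h
  exact key w hx

/-- Reachability in a mapped graph reflects back for embeddings. -/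
lemma BGJ.reachable_map_iff {α β : Type*} {G : SimpleGraph α} (f : α ↪ β) (a b : α) :
    (G.map f).Reachable (f a) (f b) ↔ G.Reachable a b := by
  constructor
  · rintro ⟨w⟩
    have key : ∀ {u v : β} (_ : (G.map f).Walk u v) {a b : α}, f a = u → f b = v →
        G.Reachable a b := by
      intro u v w
      induction w with
      | nil => rintro a b rfl hfb; rw [f.injective hfb]
      | cons h p ih =>
        rintro a b rfl rfl
        obtain ⟨a', m', hadj, ha', hm'⟩ := (SimpleGraph.map_adj _ _ _ _).mp h
        rw [f.injective ha'] at hadj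
        exact (hadj.reachable).trans (ih hm' rfl)
    exact key w rfl rfl
  · intro h
    exact h.map (⟨f, fun hadj => SimpleGraph.map_adj_apply.mpr hadj⟩ : G →g G.map f)


section Core
open SimpleGraph

lemma side_adj (S : Finset V) (ω : Conf ↥S) ⦃x y : V⦄
    (h : ((graphOf ω).map (valEmb S)).Adj x y) : x ∈ S := by
  obtain ⟨a, b, _, rfl, rfl⟩ := (SimpleGraph.map_adj _ _ _ _).mp h
  exact a.2

/-- The graph on `V` obtained from configurations on two complementary vertex sets. -/
abbrev sideSup (S T : Finset V) (ωS : Conf ↥S) (ωT : Conf ↥T) : SimpleGraph V :=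
  (graphOf ωS).map (valEmb S) ⊔ (graphOf ωT).map (valEmb T)

lemma core_reach_mem {S T : Finset V} (hdis : ∀ x : V, x ∈ S → x ∈ T → False)
    (ωS : Conf ↥S) (ωT : Conf ↥T) {x y : V}
    (h : (sideSup S T ωS ωT).Reachable x y) (hx : x ∈ S) : y ∈ S :=
  (BGJ.reach_sup (fun _ _ ha => side_adj S ωS ha)
    (fun x _ ha hxS => hdis x hxS (side_adj T ωT ha)) h hx).2

lemma core_reach_iff {S T : Finset V} (hdis : ∀ x : V, x ∈ S → x ∈ T → False)
    (ωS : Conf ↥S) (ωT : Conf ↥T) (a b : ↥S) :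
    (sideSup S T ωS ωT).Reachable a.1 b.1 ↔ (graphOf ωS).Reachable a b := by
  constructor
  · intro h
    have := (BGJ.reach_sup (fun _ _ ha => side_adj S ωS ha)
      (fun x _ ha hxS => hdis x hxS (side_adj T ωT ha)) h a.2).1
    exact (BGJ.reachable_map_iff (valEmb S) a b).mp this
  · intro h
    exact ((BGJ.reachable_map_iff (valEmb S) a b).mpr h).mono le_sup_left

lemma sideSup_comm {S T : Finset V} (ωS : Conf ↥S) (ωT : Conf ↥T) :
    sideSup S T ωS ωT = sideSup T S ωT ωS := sup_comm _ _

lemma core_card_components {S T : Finset V} (hcov : ∀ x : V, x ∈ S ∨ x ∈ T)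
    (hdis : ∀ x : V, x ∈ S → x ∈ T → False) (ωS : Conf ↥S) (ωT : Conf ↥T) :
    Nat.card (sideSup S T ωS ωT).ConnectedComponent =
      Nat.card (graphOf ωS).ConnectedComponent + Nat.card (graphOf ωT).ConnectedComponent := by
  rw [← Nat.card_sum]
  refine (Nat.card_eq_of_bijective
    (Sum.elim
      (ConnectedComponent.lift (fun a : ↥S => (sideSup S T ωS ωT).connectedComponentMk a.1)
        (fun v w p _ => ConnectedComponent.sound ((core_reach_iff hdis ωS ωT v w).mpr ⟨p⟩)))
      (ConnectedComponent.lift (fun a : ↥T => (sideSup S T ωS ωT).connectedComponentMk a.1)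
        (fun v w p _ => by
          refine ConnectedComponent.sound ?_
          rw [sideSup_comm]
          exact (core_reach_iff (fun x a b => hdis x b a) ωT ωS v w).mpr ⟨p⟩))) ⟨?_, ?_⟩).symm
  · rintro (c₁ | c₁) (c₂ | c₂) h
    · induction c₁ using ConnectedComponent.ind with | _ a =>
      induction c₂ using ConnectedComponent.ind with | _ b =>
      simp only [Sum.elim_inl, ConnectedComponent.lift_mk] at h
      exact congrArg Sum.inl (ConnectedComponent.sound
        ((core_reach_iff hdis ωS ωT a b).mp (ConnectedComponent.exact h)))
    · induction c₁ using ConnectedComponent.ind with | _ a =>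
      induction c₂ using ConnectedComponent.ind with | _ b =>
      simp only [Sum.elim_inl, Sum.elim_inr, ConnectedComponent.lift_mk] at h
      exact absurd (core_reach_mem hdis ωS ωT (ConnectedComponent.exact h) a.2)
        (fun hb => hdis b.1 hb b.2)
    · induction c₁ using ConnectedComponent.ind with | _ a =>
      induction c₂ using ConnectedComponent.ind with | _ b =>
      simp only [Sum.elim_inl, Sum.elim_inr, ConnectedComponent.lift_mk] at h
      exact absurd (core_reach_mem hdis ωS ωT (ConnectedComponent.exact h).symm b.2)
        (fun hb => hdis a.1 hb a.2)
    · induction c₁ using ConnectedComponent.ind with | _ a =>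
      induction c₂ using ConnectedComponent.ind with | _ b =>
      simp only [Sum.elim_inr, ConnectedComponent.lift_mk] at h
      refine congrArg Sum.inr (ConnectedComponent.sound ?_)
      rw [sideSup_comm] at h
      exact (core_reach_iff (fun x a b => hdis x b a) ωT ωS a b).mp
        (ConnectedComponent.exact h)
  · intro c
    induction c using ConnectedComponent.ind with | _ v =>
    rcases hcov v with hv | hv
    · exact ⟨Sum.inl ((graphOf ωS).connectedComponentMk ⟨v, hv⟩), rfl⟩
    · exact ⟨Sum.inr ((graphOf ωT).connectedComponentMk ⟨v, hv⟩), rfl⟩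

lemma core_card_componentsIn {S T : Finset V}
    (hdis : ∀ x : V, x ∈ S → x ∈ T → False) (ωS : Conf ↥S) (ωT : Conf ↥T) :
    Nat.card {C : (sideSup S T ωS ωT).ConnectedComponent | ∃ x ∈ (↑S : Set V),
        (sideSup S T ωS ωT).connectedComponentMk x = C} =
      Nat.card (graphOf ωS).ConnectedComponent := by
  refine (Nat.card_eq_of_bijective
    (fun c : (graphOf ωS).ConnectedComponent =>
      (⟨ConnectedComponent.lift (fun a : ↥S => (sideSup S T ωS ωT).connectedComponentMk a.1)
        (fun v w p _ => ConnectedComponent.sound ((core_reach_iff hdis ωS ωT v w).mpr ⟨p⟩)) c, by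
          induction c using ConnectedComponent.ind with | _ a =>
          exact ⟨a.1, a.2, rfl⟩⟩ :
        {C : (sideSup S T ωS ωT).ConnectedComponent | ∃ x ∈ (↑S : Set V),
          (sideSup S T ωS ωT).connectedComponentMk x = C})) ⟨?_, ?_⟩).symm
  · intro c₁ c₂ h
    rw [Subtype.mk.injEq] at h
    induction c₁ using ConnectedComponent.ind with | _ a =>
    induction c₂ using ConnectedComponent.ind with | _ b =>
    simp only [ConnectedComponent.lift_mk] at h
    exact ConnectedComponent.sound
      ((core_reach_iff hdis ωS ωT a b).mp (ConnectedComponent.exact h))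
  · rintro ⟨C, x, hx, hC⟩
    exact ⟨(graphOf ωS).connectedComponentMk ⟨x, hx⟩, Subtype.ext hC⟩

end Core


section JoinLemmas
open SimpleGraph

variable (R : Finset V)

lemma BGJ.hcov : ∀ x : V, x ∈ R ∨ x ∈ Rᶜ := fun x => by
  by_cases h : x ∈ R
  · exact Or.inl h
  · exact Or.inr (Finset.mem_compl.mpr h)

lemma BGJ.hdis : ∀ x : V, x ∈ R → x ∈ Rᶜ → False := fun x h h' => Finset.mem_compl.mp h' h

lemma BGJ.hdis' : ∀ x : V, x ∈ Rᶜ → x ∈ R → False := fun x h h' => Finset.mem_compl.mp h h'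

variable (ω₁ : Conf ↥R) (ω₂ : Conf ↥(Rᶜ))

lemma graphOf_join_eq : graphOf (joinConf R ω₁ ω₂) = sideSup R Rᶜ ω₁ ω₂ :=
  graphOf_joinConf R ω₁ ω₂

lemma numClusters_join :
    numClusters (joinConf R ω₁ ω₂) = numClusters ω₁ + numClusters ω₂ := by
  rw [numClusters, graphOf_join_eq]
  exact core_card_components (BGJ.hcov R) (BGJ.hdis R) ω₁ ω₂

lemma numClustersIn_join_R :
    numClustersIn (joinConf R ω₁ ω₂) (↑R) = numClusters ω₁ := by
  rw [numClustersIn, graphOf_join_eq]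
  exact core_card_componentsIn (BGJ.hdis R) ω₁ ω₂

lemma numClustersIn_join_Rc :
    numClustersIn (joinConf R ω₁ ω₂) ((↑R : Set V)ᶜ) = numClusters ω₂ := by
  rw [numClustersIn, graphOf_join_eq, sideSup_comm, ← Finset.coe_compl]
  exact core_card_componentsIn (BGJ.hdis' R) ω₂ ω₁

lemma card_join : (joinConf R ω₁ ω₂).card = ω₁.card + ω₂.card := by
  rw [joinConf, Finset.card_union_of_disjoint, Finset.card_image_of_injective _
    (liftEdge_injective R), Finset.card_image_of_injective _ (liftEdge_injective Rᶜ)]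
  rw [Finset.disjoint_left]
  rintro e he he'
  obtain ⟨f, _, rfl⟩ := Finset.mem_image.mp he
  obtain ⟨g, _, hg⟩ := Finset.mem_image.mp he'
  obtain ⟨a, ha⟩ := BGJ.sym2_exists_mem (liftEdge R f).1
  have h1 : a ∈ R := mem_of_mem_liftEdge ha
  have h2 : a ∈ Rᶜ := mem_of_mem_liftEdge (e := g) (hg ▸ ha)
  exact BGJ.hdis R a h1 h2

lemma mem_restrict_iff (S : Finset V) (ω : Conf V) (e : EdgeT ↥S) :
    e ∈ restrictConf S ω ↔ ∃ e' ∈ ω, (e' : EdgeT V).1 = e.1.map Subtype.val := by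
  simp [restrictConf]

lemma restrict_union_image {S T : Finset V} (hdis : ∀ x : V, x ∈ S → x ∈ T → False)
    (ωS : Conf ↥S) (ωT : Conf ↥T) :
    restrictConf S (ωS.image (liftEdge S) ∪ ωT.image (liftEdge T)) = ωS := by
  ext e
  rw [mem_restrict_iff]
  constructor
  · rintro ⟨e', he', h⟩
    rcases Finset.mem_union.mp he' with h' | h'
    · obtain ⟨f, hf, rfl⟩ := Finset.mem_image.mp h'
      have : f = e := liftEdge_injective S (Subtype.ext h)
      exact this ▸ hf
    · obtain ⟨f, hf, rfl⟩ := Finset.mem_image.mp h'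
      obtain ⟨a, ha⟩ := BGJ.sym2_exists_mem (liftEdge S e).1
      have h1 : a ∈ S := mem_of_mem_liftEdge ha
      have h2 : a ∈ T := mem_of_mem_liftEdge (e := f) (h ▸ ha)
      exact absurd h2 (fun h2 => hdis a h1 h2)
  · intro he
    exact ⟨liftEdge S e, Finset.mem_union_left _ (Finset.mem_image_of_mem _ he), rfl⟩

lemma restrict_join_R : restrictConf R (joinConf R ω₁ ω₂) = ω₁ :=
  restrict_union_image (BGJ.hdis R) ω₁ ω₂

lemma restrict_join_Rc : restrictConf Rᶜ (joinConf R ω₁ ω₂) = ω₂ := by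
  rw [joinConf, Finset.union_comm]
  exact restrict_union_image (BGJ.hdis' R) ω₂ ω₁

lemma joinConf_inj : Function.Injective
    (fun pq : Conf ↥R × Conf ↥(Rᶜ) => joinConf R pq.1 pq.2) := by
  intro a b h
  have h1 := congrArg (restrictConf R) h
  have h2 := congrArg (restrictConf Rᶜ) h
  simp only [restrict_join_R, restrict_join_Rc] at h1 h2
  exact Prod.ext h1 h2

lemma constOn_join : constOnClusters (joinConf R ω₁ ω₂)
    (fun x => decide (x ∈ R)) := by
  intro x y h
  rw [graphOf_join_eq] at h
  by_cases hx : x ∈ R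
  · have hy := core_reach_mem (BGJ.hdis R) ω₁ ω₂ h hx
    simp [hx, hy]
  · have hx' : x ∈ Rᶜ := Finset.mem_compl.mpr hx
    rw [sideSup_comm] at h
    have hy := core_reach_mem (BGJ.hdis' R) ω₂ ω₁ h hx'
    simp [hx, Finset.mem_compl.mp hy]

lemma join_restrict_of_const (ω : Conf V)
    (h : constOnClusters ω (fun x => decide (x ∈ R))) :
    joinConf R (restrictConf R ω) (restrictConf Rᶜ ω) = ω := by
  ext e
  constructor
  · intro he
    rcases Finset.mem_union.mp he with h' | h' <;>
    · obtain ⟨f, hf, rfl⟩ := Finset.mem_image.mp h'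
      obtain ⟨e', he', h1⟩ := (mem_restrict_iff _ ω f).mp hf
      have : e' = liftEdge _ f := Subtype.ext h1
      exact this ▸ he'
  · intro he
    obtain ⟨z, hnd⟩ := e
    revert hnd he
    induction z using Sym2.ind with
    | _ x y =>
      intro hnd he
      have hxy : x ≠ y := fun hh => hnd (Sym2.mk_isDiag_iff.mpr hh)
      have hadj : (graphOf ω).Adj x y :=
        (graphOf_adj ω x y).mpr ⟨⟨⟨s(x, y), hnd⟩, he, rfl⟩, hxy⟩
      have hcc := h x y hadj.reachable
      simp only [decide_eq_decide] at hcc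
      by_cases hx : x ∈ R
      · have hy : y ∈ R := hcc.mp hx
        refine Finset.mem_union_left _ (Finset.mem_image.mpr
          ⟨⟨s(⟨x, hx⟩, ⟨y, hy⟩), fun hd => hnd ?_⟩, ?_, ?_⟩)
        · rw [Sym2.mk_isDiag_iff] at hd ⊢
          exact congrArg Subtype.val hd
        · rw [mem_restrict_iff]
          exact ⟨⟨s(x, y), hnd⟩, he, rfl⟩
        · exact Subtype.ext rfl
      · have hx' : x ∈ Rᶜ := Finset.mem_compl.mpr hx
        have hy : y ∈ Rᶜ := Finset.mem_compl.mpr (fun hy => hx (hcc.mpr hy))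
        refine Finset.mem_union_right _ (Finset.mem_image.mpr
          ⟨⟨s(⟨x, hx'⟩, ⟨y, hy⟩), fun hd => hnd ?_⟩, ?_, ?_⟩)
        · rw [Sym2.mk_isDiag_iff] at hd ⊢
          exact congrArg Subtype.val hd
        · rw [mem_restrict_iff]
          exact ⟨⟨s(x, y), hnd⟩, he, rfl⟩
        · exact Subtype.ext rfl

lemma exists_lift_of_inside {S : Finset V} {e : EdgeT V} (h : edgeInside (↑S) e) :
    ∃ f : EdgeT ↥S, liftEdge S f = e := by
  obtain ⟨z, hnd⟩ := e
  revert hnd h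
  induction z using Sym2.ind with
  | _ x y =>
    intro hnd h
    have hx : x ∈ S := h x (Sym2.mem_mk_left x y)
    have hy : y ∈ S := h y (Sym2.mem_mk_right x y)
    refine ⟨⟨s(⟨x, hx⟩, ⟨y, hy⟩), fun hd => hnd ?_⟩, Subtype.ext rfl⟩
    rw [Sym2.mk_isDiag_iff] at hd ⊢
    exact congrArg Subtype.val hd

lemma card_edgeT_eq (S : Finset V) :
    Fintype.card (EdgeT ↥S) =
      (Finset.univ.filter (fun e : EdgeT V => edgeInside (↑S) e)).card := by
  rw [← Finset.card_univ, ← Finset.card_image_of_injective Finset.univ (liftEdge_injective S)]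
  congr 1
  ext e
  simp only [Finset.mem_image, Finset.mem_univ, true_and, Finset.mem_filter]
  constructor
  · rintro ⟨f, _, rfl⟩
    exact liftEdge_inside S f
  · intro h
    obtain ⟨f, hf⟩ := exists_lift_of_inside h
    exact ⟨f, hf⟩

/-- The number of edges between `R` and `Rᶜ`. -/
def crossCount (R : Finset V) : ℕ :=
  (Finset.univ.filter (fun e : EdgeT V =>
    ¬ edgeInside (↑R) e ∧ ¬ edgeInside ((↑R : Set V)ᶜ) e)).card

lemma card_edgeT_split :
    Fintype.card (EdgeT V) =
      Fintype.card (EdgeT ↥R) + Fintype.card (EdgeT ↥(Rᶜ)) + crossCount R := by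
  classical
  have key : ∀ e : EdgeT V, edgeInside ((↑R : Set V)ᶜ) e → ¬ edgeInside (↑R) e := by
    intro e h h'
    obtain ⟨a, ha⟩ := BGJ.sym2_exists_mem e.1
    exact (h a ha) (h' a ha)
  rw [card_edgeT_eq R, card_edgeT_eq Rᶜ]
  have h1 := Finset.card_filter_add_card_filter_not
    (s := (Finset.univ : Finset (EdgeT V))) (p := fun e => edgeInside (↑R) e)
  have h2 := Finset.card_filter_add_card_filter_not
    (s := Finset.univ.filter (fun e : EdgeT V => ¬ edgeInside (↑R) e))
    (p := fun e => edgeInside ((↑R : Set V)ᶜ) e)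
  rw [Finset.filter_filter, Finset.filter_filter] at h2
  have e1 : (Finset.univ.filter (fun e : EdgeT V =>
      ¬ edgeInside (↑R) e ∧ edgeInside ((↑R : Set V)ᶜ) e)) =
      Finset.univ.filter (fun e : EdgeT V => edgeInside (↑(Rᶜ) : Set V) e) := by
    apply Finset.filter_congr
    intro e _
    rw [Finset.coe_compl]
    exact iff_of_eq (congrArg _ rfl) |>.trans ⟨fun h => h.2, fun h => ⟨key e h, h⟩⟩
  have e2 : (Finset.univ.filter (fun e : EdgeT V =>
      ¬ edgeInside (↑R) e ∧ ¬ edgeInside ((↑R : Set V)ᶜ) e)).card = crossCount R := rfl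
  rw [e1] at h2
  rw [Finset.card_univ] at h1
  omega

end JoinLemmas


section Weights

lemma fkWeight_pos {W : Type*} [DecidableEq W] [Fintype W] {p q' : ℝ}
    (hp : p ∈ Set.Ioo (0 : ℝ) 1) (hq : 0 < q') (ω : Conf W) : 0 < fkWeight W p q' ω :=
  mul_pos (mul_pos (pow_pos hp.1 _) (pow_pos (by linarith [hp.2]) _)) (pow_pos hq _)

lemma colorWeight_nonneg {α : ℝ} (hα : α ∈ Set.Ioo (0 : ℝ) 1) (ω : Conf V) (c : V → Bool) :
    0 ≤ colorWeight ω α c := by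
  rw [colorWeight]
  split_ifs
  · exact mul_nonneg (pow_nonneg (le_of_lt hα.1) _) (pow_nonneg (by linarith [hα.2]) _)
  · exact le_refl 0

variable (R : Finset V)

lemma weight_join (p q α : ℝ) (ω₁ : Conf ↥R) (ω₂ : Conf ↥(Rᶜ)) :
    fkWeight V p q (joinConf R ω₁ ω₂) *
      colorWeight (joinConf R ω₁ ω₂) α (fun x => decide (x ∈ R))
    = (1 - p) ^ crossCount R *
        (fkWeight ↥R p (α * q) ω₁ * fkWeight ↥(Rᶜ) p ((1 - α) * q) ω₂) := by
  have hconst := constOn_join R ω₁ ω₂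
  rw [colorWeight, if_pos hconst]
  have hset1 : {x : V | (fun x => decide (x ∈ R)) x = true} = (↑R : Set V) := by
    ext x; simp
  have hset2 : {x : V | (fun x => decide (x ∈ R)) x = false} = ((↑R : Set V))ᶜ := by
    ext x; simp
  rw [hset1, hset2, numClustersIn_join_R, numClustersIn_join_Rc, fkWeight, fkWeight, fkWeight,
    card_join, numClusters_join]
  have hc1 : ω₁.card ≤ Fintype.card (EdgeT ↥R) := by
    rw [← Finset.card_univ]; exact Finset.card_le_univ ω₁
  have hc2 : ω₂.card ≤ Fintype.card (EdgeT ↥(Rᶜ)) := by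
    rw [← Finset.card_univ]; exact Finset.card_le_univ ω₂
  have hsplit : Fintype.card (EdgeT V) - (ω₁.card + ω₂.card)
      = (Fintype.card (EdgeT ↥R) - ω₁.card)
        + ((Fintype.card (EdgeT ↥(Rᶜ)) - ω₂.card) + crossCount R) := by
    rw [card_edgeT_split R]; omega
  rw [hsplit]
  simp only [pow_add, mul_pow]
  ring

lemma redSet_eq_iff (c : V → Bool) : redSet c = R ↔ c = fun x => decide (x ∈ R) := by
  constructor
  · intro h
    funext x
    have hx : (c x = true) ↔ x ∈ R := by
      rw [← h]; simp [redSet]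
    by_cases hxR : x ∈ R
    · simp [hxR, hx.mpr hxR]
    · have : c x ≠ true := fun hc => hxR (hx.mp hc)
      have hfalse : c x = false := by
        cases hcx : c x
        · rfl
        · exact absurd (hx.mp hcx) hxR
      simp [hfalse, hxR]
  · rintro rfl
    ext x
    simp [redSet]

lemma sum_decompose (p q α : ℝ) (PA : Conf ↥R → Prop) (PB : Conf ↥(Rᶜ) → Prop) :
    ∑ z ∈ Finset.univ.filter (fun z : Conf V × (V → Bool) =>
        (PA (restrictConf R z.1) ∧ PB (restrictConf Rᶜ z.1)) ∧ redSet z.2 = R),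
      fkWeight V p q z.1 * colorWeight z.1 α z.2
    = (1 - p) ^ crossCount R *
        ((∑ a ∈ Finset.univ.filter PA, fkWeight ↥R p (α * q) a) *
         (∑ b ∈ Finset.univ.filter PB, fkWeight ↥(Rᶜ) p ((1 - α) * q) b)) := by
  classical
  set cR : V → Bool := fun x => decide (x ∈ R) with hcR
  set Q : Conf V → Prop := fun ω => PA (restrictConf R ω) ∧ PB (restrictConf Rᶜ ω) with hQ
  have step1 : ∑ z ∈ Finset.univ.filter (fun z : Conf V × (V → Bool) =>
        (PA (restrictConf R z.1) ∧ PB (restrictConf Rᶜ z.1)) ∧ redSet z.2 = R),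
      fkWeight V p q z.1 * colorWeight z.1 α z.2
      = ∑ ω ∈ Finset.univ.filter Q, fkWeight V p q ω * colorWeight ω α cR := by
    rw [Finset.sum_filter, Finset.sum_filter, Fintype.sum_prod_type]
    refine Finset.sum_congr rfl (fun ω _ => ?_)
    have key : ∀ c : V → Bool,
        (if (PA (restrictConf R ω) ∧ PB (restrictConf Rᶜ ω)) ∧ redSet c = R
          then fkWeight V p q ω * colorWeight ω α c else 0)
        = (if c = cR then (if Q ω then fkWeight V p q ω * colorWeight ω α c else 0) else 0) := by
      intro c
      by_cases h1 : c = cR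
      · have hred : redSet c = R := (redSet_eq_iff R c).mpr h1
        by_cases h2 : Q ω
        · rw [if_pos h1, if_pos h2, if_pos ⟨h2, hred⟩]
        · rw [if_pos h1, if_neg h2, if_neg (fun h => h2 h.1)]
      · have hred : redSet c ≠ R := fun h => h1 ((redSet_eq_iff R c).mp h)
        rw [if_neg h1, if_neg (fun h => hred h.2)]
    simp only [key]
    rw [Finset.sum_ite_eq' Finset.univ cR]
    simp only [Finset.mem_univ, if_true]
    exact if_congr Iff.rfl rfl rfl
  rw [step1]
  set T : Finset (Conf V) := (Finset.univ : Finset (Conf ↥R × Conf ↥(Rᶜ))).image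
    (fun pq => joinConf R pq.1 pq.2) with hT
  have step2 : ∑ ω ∈ Finset.univ.filter Q, fkWeight V p q ω * colorWeight ω α cR
      = ∑ ω ∈ T.filter Q, fkWeight V p q ω * colorWeight ω α cR := by
    refine (Finset.sum_subset (Finset.filter_subset_filter _ (Finset.subset_univ T)) ?_).symm
    intro ω hω hωT
    rw [Finset.mem_filter] at hω hωT
    have hnotT : ω ∉ T := fun h => hωT ⟨h, hω.2⟩
    have hnc : ¬ constOnClusters ω cR := by
      intro hc
      exact hnotT (Finset.mem_image.mpr ⟨(restrictConf R ω, restrictConf Rᶜ ω),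
        Finset.mem_univ _, join_restrict_of_const R ω hc⟩)
    rw [colorWeight, if_neg hnc, mul_zero]
  rw [step2, hT, Finset.filter_image,
    Finset.sum_image (fun a _ b _ h => joinConf_inj R h)]
  have hQj : Finset.univ.filter (fun pq : Conf ↥R × Conf ↥(Rᶜ) => Q (joinConf R pq.1 pq.2))
      = Finset.univ.filter (fun pq : Conf ↥R × Conf ↥(Rᶜ) => PA pq.1 ∧ PB pq.2) := by
    refine Finset.filter_congr (fun pq _ => ?_)
    rw [hQ]
    simp only [restrict_join_R, restrict_join_Rc]
  rw [hQj]
  rw [Finset.sum_congr rfl (fun pq _ => by rw [weight_join R p q α pq.1 pq.2])]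
  rw [Finset.sum_filter, Fintype.sum_prod_type]
  have term_eq : ∀ (a : Conf ↥R) (b : Conf ↥(Rᶜ)),
      (if PA a ∧ PB b then (1 - p) ^ crossCount R *
          (fkWeight ↥R p (α * q) a * fkWeight ↥(Rᶜ) p ((1 - α) * q) b) else 0)
      = ((1 - p) ^ crossCount R * (if PA a then fkWeight ↥R p (α * q) a else 0)) *
        (if PB b then fkWeight ↥(Rᶜ) p ((1 - α) * q) b else 0) := by
    intro a b
    by_cases h1 : PA a <;> by_cases h2 : PB b <;>
      simp [h1, h2] <;> ring
  simp only [term_eq]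
  rw [← Finset.sum_mul_sum]
  rw [← Finset.mul_sum, Finset.sum_filter, Finset.sum_filter]
  ring

lemma sum_decompose_event (p q α : ℝ) (E : Set (Conf V × (V → Bool)))
    (PA : Conf ↥R → Prop) (PB : Conf ↥(Rᶜ) → Prop)
    (hE : ∀ z : Conf V × (V → Bool),
      z ∈ E ↔ (PA (restrictConf R z.1) ∧ PB (restrictConf Rᶜ z.1)) ∧ redSet z.2 = R) :
    ∑ z ∈ Finset.univ.filter (· ∈ E), fkWeight V p q z.1 * colorWeight z.1 α z.2
    = (1 - p) ^ crossCount R *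
        ((∑ a ∈ Finset.univ.filter PA, fkWeight ↥R p (α * q) a) *
         (∑ b ∈ Finset.univ.filter PB, fkWeight ↥(Rᶜ) p ((1 - α) * q) b)) := by
  have hfil : Finset.univ.filter (· ∈ E)
      = Finset.univ.filter (fun z : Conf V × (V → Bool) =>
          (PA (restrictConf R z.1) ∧ PB (restrictConf Rᶜ z.1)) ∧ redSet z.2 = R) := by
    ext z
    simp only [Finset.mem_filter, Finset.mem_univ, true_and]
    exact hE z
  rw [hfil]
  exact sum_decompose R p q α PA PB

end Weights

end BGJ

/-- **Lemma (Bollobás–Grimmett–Janson).** Sample `ω` from the FK measure on a finite vertex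
set `V` with parameters `(p, q)`, and color each cluster red independently with probability
`α`; let `R` be the set of red vertices.  Conditionally on `R`, the restrictions of `ω` to
`R` and to `V ∖ R` are independent, distributed as the FK measures with cluster weights
`αq` on `R` and `(1-α)q` on `V ∖ R` respectively. -/
theorem fk_coloring_decomposition (V : Type*) [Fintype V] [DecidableEq V]
    (p q α : ℝ) (hp : p ∈ Set.Ioo (0 : ℝ) 1) (hq : 0 < q) (hα : α ∈ Set.Ioo (0 : ℝ) 1)
    (R : Finset V) (A : Set (Conf ↥R)) (B : Set (Conf ↥(Rᶜ))) :
    condProbOf (fun z : Conf V × (V → Bool) => fkWeight V p q z.1 * colorWeight z.1 α z.2)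
        {z | restrictConf R z.1 ∈ A ∧ restrictConf Rᶜ z.1 ∈ B}
        {z | redSet z.2 = R}
      = probOf (fkWeight ↥R p (α * q)) A * probOf (fkWeight ↥(Rᶜ) p ((1 - α) * q)) B := by
  classical
  obtain ⟨hp0, hp1⟩ := hp
  obtain ⟨hα0, hα1⟩ := hα
  rw [condProbOf, probOf, probOf,
    sum_decompose_event R p q α
      ({z : Conf V × (V → Bool) | restrictConf R z.1 ∈ A ∧ restrictConf Rᶜ z.1 ∈ B}
        ∩ {z | redSet z.2 = R}) (· ∈ A) (· ∈ B)
      (fun z => by simp [Set.mem_inter_iff, Set.mem_setOf_eq]),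
    sum_decompose_event R p q α {z : Conf V × (V → Bool) | redSet z.2 = R}
      (fun _ => True) (fun _ => True) (fun z => by simp [Set.mem_setOf_eq]),
    probOf, probOf]
  rw [Finset.filter_true, Finset.filter_true]
  set K : ℝ := (1 - p) ^ crossCount R with hK
  set SA : ℝ := ∑ a ∈ Finset.univ.filter (· ∈ A), fkWeight ↥R p (α * q) a with hSA
  set SB : ℝ := ∑ b ∈ Finset.univ.filter (· ∈ B), fkWeight ↥(Rᶜ) p ((1 - α) * q) b with hSB
  set S1 : ℝ := ∑ a : Conf ↥R, fkWeight ↥R p (α * q) a with hS1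
  set S2 : ℝ := ∑ b : Conf ↥(Rᶜ), fkWeight ↥(Rᶜ) p ((1 - α) * q) b with hS2
  set Z : ℝ := ∑ z : Conf V × (V → Bool), fkWeight V p q z.1 * colorWeight z.1 α z.2 with hZ
  have hKne : K ≠ 0 := pow_ne_zero _ (by linarith)
  have hS1pos : 0 < S1 := by
    refine Finset.sum_pos (fun a _ => fkWeight_pos ⟨hp0, hp1⟩ (mul_pos hα0 hq) a) ?_
    exact Finset.univ_nonempty
  have hS2pos : 0 < S2 := by
    refine Finset.sum_pos
      (fun b _ => fkWeight_pos ⟨hp0, hp1⟩ (mul_pos (by linarith : (0:ℝ) < 1 - α) hq) b) ?_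
    exact Finset.univ_nonempty
  have hZpos : 0 < Z := by
    refine Finset.sum_pos' (fun z _ => mul_nonneg (fkWeight_pos ⟨hp0, hp1⟩ hq z.1).le
      (colorWeight_nonneg ⟨hα0, hα1⟩ z.1 z.2)) ?_
    refine ⟨(joinConf R ∅ ∅, fun x => decide (x ∈ R)), Finset.mem_univ _, ?_⟩
    refine mul_pos (fkWeight_pos ⟨hp0, hp1⟩ hq _) ?_
    rw [colorWeight, if_pos (constOn_join R ∅ ∅)]
    exact mul_pos (pow_pos hα0 _) (pow_pos (by linarith) _)
  have hZne : Z ≠ 0 := hZpos.ne'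
  have hS1ne : S1 ≠ 0 := hS1pos.ne'
  have hS2ne : S2 ≠ 0 := hS2pos.ne'
  field_simp
end

section
/- Consider the Erdős–Rényi random graph G(n,p) with np = λ < 1 fixed. There exists c = c(λ) > 0 such that for every ρ > 0 there exists M_0 = M_0(λ,ρ) such that for every M ≥ M_0 there is a constant C with, for all n, π_{n,λ}(|S_M| ≥ ρn) ≤ C·e^{−c·ρ·n}. -/
open scoped Classical

noncomputable section

namespace ERSub



open Finset

variable {V : Type*} [DecidableEq V] [Fintype V]

/-- indicator -/
def ind (P : Prop) : ℝ := if P then 1 else 0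

lemma ind_nonneg {P : Prop} : (0:ℝ) ≤ ind P := by unfold ind; split <;> norm_num
lemma ind_le_one {P : Prop} : ind P ≤ 1 := by unfold ind; split <;> norm_num
lemma ind_mono {P Q : Prop} (h : P → Q) : ind P ≤ ind Q := by
  unfold ind; split
  · rw [if_pos (h (by assumption))]
  · exact ind_nonneg
lemma ind_of {P : Prop} (h : P) : ind P = 1 := if_pos h
lemma ind_of_not {P : Prop} (h : ¬ P) : ind P = 0 := if_neg h
lemma ind_congr {P Q : Prop} (h : P ↔ Q) : ind P = ind Q := by
  unfold ind; by_cases hP : P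
  · rw [if_pos hP, if_pos (h.mp hP)]
  · rw [if_neg hP, if_neg (fun hq => hP (h.mpr hq))]

/-- integral of `f` against the unnormalized Bernoulli product weights -/
def Pint (p : ℝ) (f : Conf V → ℝ) : ℝ :=
  ∑ ω : Conf V, p ^ ω.card * (1 - p) ^ (Fintype.card (EdgeT V) - ω.card) * f ω

lemma Pint_one (p : ℝ) : Pint p (fun _ : Conf V => (1:ℝ)) = 1 := by
  classical
  unfold Pint
  have h : ∀ ω : Conf V, p ^ ω.card * (1 - p) ^ (Fintype.card (EdgeT V) - ω.card) * 1
      = (∏ e ∈ ω, p) * ∏ e ∈ (univ \ ω), (1 - p) := by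
    intro ω
    rw [mul_one, prod_const, prod_const, card_sdiff_of_subset (subset_univ ω)]
    rfl
  rw [Finset.sum_congr rfl (fun ω _ => h ω)]
  have h2 : (univ : Finset (Conf V)) = (univ : Finset (EdgeT V)).powerset := by
    ext ω; simp
  rw [h2, ← Finset.prod_add]
  simp

lemma Pint_zero (p : ℝ) : Pint p (fun _ : Conf V => (0:ℝ)) = 0 := by
  simp [Pint]

lemma Pint_nonneg {p : ℝ} (hp0 : 0 ≤ p) (hp1 : p ≤ 1) {f : Conf V → ℝ}
    (hf : ∀ ω, 0 ≤ f ω) : 0 ≤ Pint p f := by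
  apply Finset.sum_nonneg
  intro ω _
  have h1 : (0:ℝ) ≤ 1 - p := by linarith
  have h2 : (0:ℝ) ≤ p ^ ω.card * (1 - p) ^ (Fintype.card (EdgeT V) - ω.card) := by positivity
  exact mul_nonneg h2 (hf ω)

lemma Pint_mono {p : ℝ} (hp0 : 0 ≤ p) (hp1 : p ≤ 1) {f g : Conf V → ℝ}
    (h : ∀ ω, f ω ≤ g ω) : Pint p f ≤ Pint p g := by
  apply Finset.sum_le_sum
  intro ω _
  have h1 : (0:ℝ) ≤ 1 - p := by linarith
  have h2 : (0:ℝ) ≤ p ^ ω.card * (1 - p) ^ (Fintype.card (EdgeT V) - ω.card) := by positivity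
  exact mul_le_mul_of_nonneg_left (h ω) h2

lemma Pint_le_one {p : ℝ} (hp0 : 0 ≤ p) (hp1 : p ≤ 1) {f : Conf V → ℝ}
    (h : ∀ ω, f ω ≤ 1) : Pint p f ≤ 1 := by
  calc Pint p f ≤ Pint p (fun _ => 1) := Pint_mono hp0 hp1 h
  _ = 1 := Pint_one p

lemma Pint_sum {ι : Type*} (p : ℝ) (T : Finset ι) (F : ι → Conf V → ℝ) :
    Pint p (fun ω => ∑ s ∈ T, F s ω) = ∑ s ∈ T, Pint p (F s) := by
  unfold Pint
  rw [Finset.sum_comm]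
  apply Finset.sum_congr rfl
  intro ω _
  rw [Finset.mul_sum]

lemma Pint_const_mul (p c : ℝ) (f : Conf V → ℝ) :
    Pint p (fun ω => c * f ω) = c * Pint p f := by
  unfold Pint
  rw [Finset.mul_sum]
  apply Finset.sum_congr rfl
  intro ω _
  ring

lemma Pint_const (p c : ℝ) : Pint p (fun _ : Conf V => c) = c := by
  have := Pint_const_mul (V := V) p c (fun _ => 1)
  simpa [Pint_one] using this

/-- single edge reveal -/
lemma reveal_one (p : ℝ) (e : EdgeT V) (f : Conf V → ℝ) :
    Pint p f = p * Pint p (fun ω => f (insert e ω)) + (1 - p) * Pint p (fun ω => f (ω.erase e)) := by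
  classical
  set N := Fintype.card (EdgeT V) with hN
  set w : Conf V → ℝ := fun ω => p ^ ω.card * (1 - p) ^ (N - ω.card) with hw
  -- pairing: any sum over all configs = sum over e-free configs of pair values
  have pairing : ∀ g : Conf V → ℝ,
      ∑ ω : Conf V, g ω = ∑ τ ∈ univ.filter (fun τ : Conf V => e ∉ τ), (g τ + g (insert e τ)) := by
    intro g
    rw [Finset.sum_add_distrib]
    have hsplit := Finset.sum_filter_add_sum_filter_not (univ : Finset (Conf V))
      (fun τ => e ∉ τ) g
    rw [← hsplit]
    congr 1
    apply Finset.sum_nbij' (fun ω => ω.erase e) (fun τ => insert e τ)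
    · intro ω hω
      simp only [Finset.mem_filter, Finset.mem_univ, true_and] at hω ⊢
      simp [hω]
    · intro τ hτ
      simp only [Finset.mem_filter, Finset.mem_univ, true_and, not_not] at hτ ⊢
      simp
    · intro ω hω
      simp only [Finset.mem_filter, Finset.mem_univ, true_and, not_not] at hω
      exact Finset.insert_erase hω
    · intro τ hτ
      simp only [Finset.mem_filter, Finset.mem_univ, true_and] at hτ
      exact Finset.erase_insert hτ
    · intro ω hω
      simp only [Finset.mem_filter, Finset.mem_univ, true_and, not_not] at hω
      rw [Finset.insert_erase hω]
  unfold Pint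
  rw [pairing (fun ω => w ω * f ω), pairing (fun ω => w ω * f (insert e ω)),
      pairing (fun ω => w ω * f (ω.erase e)), Finset.mul_sum, Finset.mul_sum,
      ← Finset.sum_add_distrib]
  apply Finset.sum_congr rfl
  intro τ hτ
  simp only [Finset.mem_filter, Finset.mem_univ, true_and] at hτ
  have hins : insert e (insert e τ) = insert e τ := by simp
  have her : τ.erase e = τ := Finset.erase_eq_of_notMem hτ
  have her2 : (insert e τ).erase e = τ := Finset.erase_insert hτ
  rw [hins, her, her2]
  have hcard : (insert e τ).card = τ.card + 1 := Finset.card_insert_of_notMem hτ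
  have hlt : τ.card < N := by
    have : τ ⊂ univ := Finset.ssubset_univ_iff.mpr (fun h => hτ (h ▸ Finset.mem_univ e))
    exact Finset.card_lt_card this |>.trans_le (le_of_eq (Finset.card_univ))
  have hsub : N - τ.card = (N - (τ.card + 1)) + 1 := by omega
  have hw1 : w (insert e τ) = p ^ (τ.card + 1) * (1 - p) ^ (N - (τ.card + 1)) := by
    rw [hw]; simp only [hcard]
  have hw0 : w τ = p ^ τ.card * (1 - p) ^ ((N - (τ.card + 1)) + 1) := by
    rw [hw]; simp only [← hsub]
  rw [hw1, hw0, pow_succ (1-p) (N - (τ.card+1)), pow_succ p τ.card]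
  ring


/-- block reveal -/

lemma reveal (p : ℝ) (B : Finset (EdgeT V)) (f : Conf V → ℝ) :
    Pint p f = ∑ β ∈ B.powerset,
      p ^ β.card * (1 - p) ^ (B.card - β.card) * Pint p (fun ω => f ((ω \ B) ∪ β)) := by
  classical
  induction B using Finset.induction generalizing f with
  | empty =>
    simp
  | @insert e B he ih =>
    rw [ih f]
    have step : ∀ β ∈ B.powerset,
        Pint p (fun ω => f ((ω \ B) ∪ β))
          = p * Pint p (fun ω => f ((ω \ insert e B) ∪ insert e β))
            + (1 - p) * Pint p (fun ω => f ((ω \ insert e B) ∪ β)) := by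
      intro β hβ
      have hβB : β ⊆ B := Finset.mem_powerset.mp hβ
      have heβ : e ∉ β := fun h => he (hβB h)
      rw [reveal_one p e (fun ω => f ((ω \ B) ∪ β))]
      congr 1
      · congr 1
        apply congrArg
        funext ω
        congr 1
        ext x
        by_cases hxe : x = e
        · subst hxe; simp [he, heβ]
        · simp only [Finset.mem_union, Finset.mem_sdiff, Finset.mem_insert, hxe, false_or]
          try tauto
      · congr 1
        apply congrArg
        funext ω
        congr 1
        ext x
        by_cases hxe : x = e
        · subst hxe; simp [heβ]
        · simp only [Finset.mem_union, Finset.mem_sdiff, Finset.mem_insert, Finset.mem_erase,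
            hxe, false_or, not_false_iff, true_and]
          try tauto
    rw [Finset.sum_congr rfl (fun β hβ => by rw [step β hβ])]
    rw [Finset.powerset_insert, Finset.sum_union]
    · -- split LHS sum of (a+b) into two sums; match
      rw [Finset.sum_congr rfl (fun β hβ => mul_add
        (p ^ β.card * (1 - p) ^ (B.card - β.card)) _ _), Finset.sum_add_distrib]
      rw [add_comm]
      congr 1
      · -- (1-p) part matches the plain powerset part
        apply Finset.sum_congr rfl
        intro β hβ
        have hβB : β ⊆ B := Finset.mem_powerset.mp hβ
        have hcard : β.card ≤ B.card := Finset.card_le_card hβB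
        have : (insert e B).card = B.card + 1 := Finset.card_insert_of_notMem he
        rw [this]
        have : B.card + 1 - β.card = (B.card - β.card) + 1 := by omega
        rw [this, pow_succ]
        ring
      · -- p part matches the image part
        rw [Finset.sum_image (fun β₁ h₁ β₂ h₂ hins => by
          have h₁' : β₁ ⊆ B := Finset.mem_powerset.mp h₁
          have h₂' : β₂ ⊆ B := Finset.mem_powerset.mp h₂
          have he₁ : e ∉ β₁ := fun h => he (h₁' h)
          have he₂ : e ∉ β₂ := fun h => he (h₂' h)
          rw [← Finset.erase_insert he₁, ← Finset.erase_insert he₂, hins])]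
        apply Finset.sum_congr rfl
        intro β hβ
        have hβB : β ⊆ B := Finset.mem_powerset.mp hβ
        have heβ : e ∉ β := fun h => he (hβB h)
        have hc1 : (insert e β).card = β.card + 1 := Finset.card_insert_of_notMem heβ
        have hc2 : (insert e B).card = B.card + 1 := Finset.card_insert_of_notMem he
        rw [hc1, hc2]
        have : B.card + 1 - (β.card + 1) = B.card - β.card := by omega
        rw [this, pow_succ]
        ring
    · -- disjointness of powerset and image
      rw [Finset.disjoint_left]
      intro β hβ hβ'
      have hβB : β ⊆ B := Finset.mem_powerset.mp hβ
      obtain ⟨γ, hγ, hγβ⟩ := Finset.mem_image.mp hβ'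
      have : e ∈ β := hγβ ▸ Finset.mem_insert_self e γ
      exact he (hβB this)

/-- a function depending only on the status of edges in `E` -/
def DependsOn (f : Conf V → ℝ) (E : Finset (EdgeT V)) : Prop :=
  ∀ ω ω' : Conf V, (∀ e ∈ E, (e ∈ ω ↔ e ∈ ω')) → f ω = f ω'

lemma sum_powerset_weight (B : Finset (EdgeT V)) (x y : ℝ) :
    ∑ β ∈ B.powerset, x ^ β.card * y ^ (B.card - β.card) = (x + y) ^ B.card := by
  classical
  rw [← Finset.prod_const, Finset.prod_add]
  apply Finset.sum_congr rfl
  intro β hβ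
  have hβB : β ⊆ B := Finset.mem_powerset.mp hβ
  rw [Finset.prod_const, Finset.prod_const, Finset.card_sdiff_of_subset hβB]

lemma Pint_indep (p : ℝ) {f g : Conf V → ℝ} {E₁ E₂ : Finset (EdgeT V)}
    (hd : Disjoint E₁ E₂) (hf : DependsOn f E₁) (hg : DependsOn g E₂) :
    Pint p (fun ω => f ω * g ω) = Pint p f * Pint p g := by
  classical
  have key : ∀ (β : Finset (EdgeT V)), β ⊆ E₁ → ∀ ω : Conf V,
      f ((ω \ E₁) ∪ β) = f β ∧ g ((ω \ E₁) ∪ β) = g ω := by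
    intro β hβ ω
    constructor
    · apply hf
      intro e he
      simp only [Finset.mem_union, Finset.mem_sdiff]
      constructor
      · rintro (⟨_, h⟩|h); · exact absurd he h
        · exact h
      · intro h; right; exact h
    · apply hg
      intro e he
      have heE1 : e ∉ E₁ := fun h => (Finset.disjoint_left.mp hd h) he
      have heβ : e ∉ β := fun h => heE1 (hβ h)
      simp only [Finset.mem_union, Finset.mem_sdiff]
      tauto
  rw [reveal p E₁ (fun ω => f ω * g ω), reveal p E₁ f]
  have h1 : ∀ β ∈ E₁.powerset,
      Pint p (fun ω => f ((ω \ E₁) ∪ β) * g ((ω \ E₁) ∪ β)) = f β * Pint p g := by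
    intro β hβ
    have hβE : β ⊆ E₁ := Finset.mem_powerset.mp hβ
    have : (fun ω => f ((ω \ E₁) ∪ β) * g ((ω \ E₁) ∪ β)) = (fun ω => f β * g ω) := by
      funext ω
      rw [(key β hβE ω).1, (key β hβE ω).2]
    rw [this, Pint_const_mul]
  have h2 : ∀ β ∈ E₁.powerset,
      Pint p (fun ω => f ((ω \ E₁) ∪ β)) = f β := by
    intro β hβ
    have hβE : β ⊆ E₁ := Finset.mem_powerset.mp hβ
    have : (fun ω => f ((ω \ E₁) ∪ β)) = (fun _ => f β) := by
      funext ω; exact (key β hβE ω).1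
    rw [this, Pint_const]
  have e1 : (∑ β ∈ E₁.powerset, p ^ β.card * (1 - p) ^ (E₁.card - β.card) *
      Pint p (fun ω => f ((ω \ E₁) ∪ β) * g ((ω \ E₁) ∪ β)))
      = ∑ β ∈ E₁.powerset, p ^ β.card * (1 - p) ^ (E₁.card - β.card) * (f β * Pint p g) :=
    Finset.sum_congr rfl (fun β hβ => by rw [h1 β hβ])
  have e2 : (∑ β ∈ E₁.powerset, p ^ β.card * (1 - p) ^ (E₁.card - β.card) *
      Pint p (fun ω => f ((ω \ E₁) ∪ β)))
      = ∑ β ∈ E₁.powerset, p ^ β.card * (1 - p) ^ (E₁.card - β.card) * f β :=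
    Finset.sum_congr rfl (fun β hβ => by rw [h2 β hβ])
  rw [e1, e2, Finset.sum_mul]
  apply Finset.sum_congr rfl
  intro β hβ
  ring



def adjIn (W : Finset V) (ω : Conf V) (x y : V) : Prop :=
  x ∈ W ∧ y ∈ W ∧ ∃ e ∈ ω, (e : Sym2 V) = s(x, y)

/-- reachability within `W` -/
def reachIn (W : Finset V) (ω : Conf V) : V → V → Prop :=
  Relation.ReflTransGen (adjIn W ω)

def insideE (W : Finset V) (e : EdgeT V) : Prop := ∀ x ∈ (e : Sym2 V), x ∈ W

def starE (W : Finset V) (a : V) : Finset (EdgeT V) :=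
  univ.filter (fun e => insideE W e ∧ a ∈ (e : Sym2 V))

def intE (W : Finset V) : Finset (EdgeT V) := univ.filter (fun e => insideE W e)

def touchE (W S : Finset V) : Finset (EdgeT V) :=
  univ.filter (fun e => insideE W e ∧ ∃ x ∈ (e : Sym2 V), x ∈ S)

def cluster (W : Finset V) (ω : Conf V) (v : V) : Finset V :=
  W.filter (fun y => reachIn W ω v y)

def csize (W : Finset V) (ω : Conf V) (v : V) : ℕ := (cluster W ω v).card

def rsize (W A : Finset V) (ω : Conf V) : ℕ :=
  (W.filter (fun y => ∃ x ∈ A, reachIn W ω x y)).card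

def smc (W : Finset V) (ω : Conf V) (M : ℝ) : ℕ :=
  (W.filter (fun x => M < (csize W ω x : ℝ))).card

lemma adjIn_symm {W : Finset V} {ω : Conf V} {x y : V} (h : adjIn W ω x y) : adjIn W ω y x := by
  obtain ⟨hx, hy, e, he, hee⟩ := h
  exact ⟨hy, hx, e, he, by rw [hee, Sym2.eq_swap]⟩

lemma reachIn_symm {W : Finset V} {ω : Conf V} : Symmetric (reachIn W ω) :=
  fun a b h => (@Relation.ReflTransGen.stdSymm _ _ ⟨fun _ _ h => adjIn_symm h⟩).symm a b h

lemma reachIn_trans {W : Finset V} {ω : Conf V} {x y z : V}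
    (h1 : reachIn W ω x y) (h2 : reachIn W ω y z) : reachIn W ω x z :=
  Relation.ReflTransGen.trans h1 h2

lemma adjIn_insideE {W : Finset V} {ω : Conf V} {x y : V} (h : adjIn W ω x y) :
    ∃ e ∈ ω, (e : Sym2 V) = s(x, y) ∧ insideE W e := by
  obtain ⟨hx, hy, e, he, hee⟩ := h
  refine ⟨e, he, hee, ?_⟩
  intro z hz
  rw [hee, Sym2.mem_iff] at hz
  rcases hz with rfl | rfl
  · exact hx
  · exact hy

lemma adjIn_congr {W : Finset V} {ω ω' : Conf V}
    (h : ∀ e : EdgeT V, insideE W e → (e ∈ ω ↔ e ∈ ω')) {x y : V}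
    (hadj : adjIn W ω x y) : adjIn W ω' x y := by
  obtain ⟨e, he, hee, hin⟩ := adjIn_insideE hadj
  exact ⟨hadj.1, hadj.2.1, e, (h e hin).mp he, hee⟩

lemma reachIn_congr {W : Finset V} {ω ω' : Conf V}
    (h : ∀ e : EdgeT V, insideE W e → (e ∈ ω ↔ e ∈ ω')) {x y : V}
    (hr : reachIn W ω x y) : reachIn W ω' x y := by
  induction hr with
  | refl => exact Relation.ReflTransGen.refl
  | tail _ hadj ih => exact ih.tail (adjIn_congr h hadj)

lemma adjIn_mono {W W' : Finset V} {ω : Conf V} (hW : W ⊆ W') {x y : V}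
    (h : adjIn W ω x y) : adjIn W' ω x y :=
  ⟨hW h.1, hW h.2.1, h.2.2⟩

lemma reachIn_mono {W W' : Finset V} {ω : Conf V} (hW : W ⊆ W') {x y : V}
    (h : reachIn W ω x y) : reachIn W' ω x y := by
  induction h with
  | refl => exact Relation.ReflTransGen.refl
  | tail _ hadj ih => exact ih.tail (adjIn_mono hW hadj)

lemma mem_cluster {W : Finset V} {ω : Conf V} {v y : V} :
    y ∈ cluster W ω v ↔ y ∈ W ∧ reachIn W ω v y := by
  unfold cluster; rw [Finset.mem_filter]

lemma mem_cluster_self {W : Finset V} {ω : Conf V} {v : V} (hv : v ∈ W) :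
    v ∈ cluster W ω v := mem_cluster.mpr ⟨hv, Relation.ReflTransGen.refl⟩

lemma cluster_subset {W : Finset V} {ω : Conf V} {v : V} : cluster W ω v ⊆ W :=
  Finset.filter_subset _ _

lemma cluster_closed {W : Finset V} {ω : Conf V} {v x y : V}
    (hx : x ∈ cluster W ω v) (h : adjIn W ω x y) : y ∈ cluster W ω v :=
  mem_cluster.mpr ⟨h.2.1, (mem_cluster.mp hx).2.tail h⟩

lemma cluster_eq_of_mem {W : Finset V} {ω : Conf V} {v x : V}
    (hx : x ∈ cluster W ω v) : cluster W ω x = cluster W ω v := by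
  obtain ⟨hxW, hvx⟩ := mem_cluster.mp hx
  ext y
  rw [mem_cluster, mem_cluster]
  constructor
  · rintro ⟨hyW, hxy⟩
    exact ⟨hyW, reachIn_trans hvx hxy⟩
  · rintro ⟨hyW, hvy⟩
    exact ⟨hyW, reachIn_trans (reachIn_symm hvx) hvy⟩

lemma not_mem_cluster_reach {W : Finset V} {ω : Conf V} {v x y : V}
    (hx : x ∉ cluster W ω v) (hxW : x ∈ W) (h : reachIn W ω x y) :
    y ∉ cluster W ω v := by
  intro hy
  obtain ⟨hyW, hvy⟩ := mem_cluster.mp hy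
  exact hx (mem_cluster.mpr ⟨hxW, reachIn_trans hvy (reachIn_symm h)⟩)

/-- reachability restricted to the complement of a cluster -/
lemma reach_sdiff_cluster {W : Finset V} {ω : Conf V} {v x y : V}
    (hx : x ∉ cluster W ω v) (hxW : x ∈ W) (h : reachIn W ω x y) :
    reachIn (W \ cluster W ω v) ω x y := by
  induction h with
  | refl => exact Relation.ReflTransGen.refl
  | @tail b c hxb hbc ih =>
    apply ih.tail
    have hbS : b ∉ cluster W ω v := not_mem_cluster_reach hx hxW hxb
    have hcS : c ∉ cluster W ω v := not_mem_cluster_reach hx hxW (hxb.tail hbc)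
    exact ⟨Finset.mem_sdiff.mpr ⟨hbc.1, hbS⟩, Finset.mem_sdiff.mpr ⟨hbc.2.1, hcS⟩, hbc.2.2⟩

lemma csize_sdiff_cluster {W : Finset V} {ω : Conf V} {v x : V}
    (hx : x ∉ cluster W ω v) (hxW : x ∈ W) :
    csize W ω x = csize (W \ cluster W ω v) ω x := by
  unfold csize
  congr 1
  ext y
  rw [mem_cluster, mem_cluster]
  constructor
  · rintro ⟨hyW, hxy⟩
    refine ⟨Finset.mem_sdiff.mpr ⟨hyW, not_mem_cluster_reach hx hxW hxy⟩, ?_⟩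
    exact reach_sdiff_cluster hx hxW hxy
  · rintro ⟨hyW, hxy⟩
    exact ⟨(Finset.mem_sdiff.mp hyW).1, reachIn_mono (Finset.sdiff_subset) hxy⟩

/-- splitting `smc` off a cluster -/
lemma smc_split {W : Finset V} {ω : Conf V} {v : V} (hv : v ∈ W) (M : ℝ) :
    smc W ω M = (if M < ((cluster W ω v).card : ℝ) then (cluster W ω v).card else 0)
      + smc (W \ cluster W ω v) ω M := by
  classical
  set S := cluster W ω v with hS
  have hSW : S ⊆ W := cluster_subset
  unfold smc
  have hsplit : W.filter (fun x => M < ((csize W ω x : ℕ) : ℝ))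
      = (S.filter (fun x => M < ((csize W ω x : ℕ) : ℝ)))
        ∪ ((W \ S).filter (fun x => M < ((csize W ω x : ℕ) : ℝ))) := by
    rw [← Finset.filter_union, Finset.union_sdiff_of_subset hSW]
  rw [hsplit, Finset.card_union_of_disjoint]
  · congr 1
    · -- on S, the cluster size is S.card
      have hcs : ∀ x ∈ S, csize W ω x = S.card := by
        intro x hx
        unfold csize
        rw [hS] at hx ⊢
        rw [cluster_eq_of_mem hx]
      rw [Finset.filter_congr (fun x hx => by rw [hcs x hx])]
      split
      · rw [Finset.filter_true_of_mem (fun x hx => by assumption)]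
      · rw [Finset.filter_false_of_mem (fun x hx => by assumption)]
        simp
    · -- on W \ S the cluster sizes agree with the restricted ones
      congr 1
      apply Finset.filter_congr
      intro x hx
      obtain ⟨hxW, hxS⟩ := Finset.mem_sdiff.mp hx
      rw [csize_sdiff_cluster hxS hxW]
  · exact Finset.disjoint_filter_filter (Finset.disjoint_sdiff)


lemma reach_avoid {W : Finset V} {ω : Conf V} (a : V) {x y : V}
    (h : reachIn W ω x y) : y ≠ a →
    reachIn (W.erase a) ω x y ∨ ∃ z, adjIn W ω a z ∧ z ≠ a ∧ reachIn (W.erase a) ω z y := by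
  induction h with
  | refl => intro _; exact Or.inl Relation.ReflTransGen.refl
  | @tail b c hxb hbc ih =>
    intro hc
    by_cases hba : b = a
    · subst hba
      exact Or.inr ⟨c, hbc, hc, Relation.ReflTransGen.refl⟩
    · have hadj' : adjIn (W.erase a) ω b c :=
        ⟨Finset.mem_erase.mpr ⟨hba, hbc.1⟩, Finset.mem_erase.mpr ⟨hc, hbc.2.1⟩, hbc.2.2⟩
      rcases ih hba with h' | ⟨z, hz1, hz2, hz3⟩
      · exact Or.inl (h'.tail hadj')
      · exact Or.inr ⟨z, hz1, hz2, hz3.tail hadj'⟩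

lemma reach_erase_self {W : Finset V} {ω : Conf V} {a y : V}
    (h : reachIn (W.erase a) ω a y) : y = a := by
  rcases Relation.ReflTransGen.cases_head h with heq | ⟨z, hz, _⟩
  · exact heq.symm
  · exact absurd ((Finset.mem_erase.mp hz.1).1) (fun hne => hne rfl)

lemma rsize_peel {W A : Finset V} {ω : Conf V} {a : V} (ha : a ∈ A) (hAW : A ⊆ W) :
    rsize W A ω ≤ 1 +
      rsize (W.erase a) ((A ∪ W.filter (fun y => adjIn W ω a y)).erase a) ω := by
  classical
  set A' := (A ∪ W.filter (fun y => adjIn W ω a y)).erase a with hA'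
  have hsub : W.filter (fun y => ∃ x ∈ A, reachIn W ω x y)
      ⊆ insert a ((W.erase a).filter (fun y => ∃ x ∈ A', reachIn (W.erase a) ω x y)) := by
    intro y hy
    have hy' := Finset.mem_filter.mp hy
    have hyW := hy'.1
    obtain ⟨x, hxA, hreach⟩ := hy'.2
    by_cases hya : y = a
    · subst hya; exact Finset.mem_insert_self _ _
    · apply Finset.mem_insert_of_mem
      rw [Finset.mem_filter]
      refine ⟨Finset.mem_erase.mpr ⟨hya, hyW⟩, ?_⟩
      rcases reach_avoid a hreach hya with h' | ⟨z, hz1, hz2, hz3⟩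
      · have hxa : x ≠ a := by
          intro hxaeq
          subst hxaeq
          exact hya (reach_erase_self h')
        refine ⟨x, ?_, h'⟩
        rw [hA', Finset.mem_erase]
        exact ⟨hxa, Finset.mem_union_left _ hxA⟩
      · refine ⟨z, ?_, hz3⟩
        rw [hA', Finset.mem_erase]
        refine ⟨hz2, Finset.mem_union_right _ ?_⟩
        rw [Finset.mem_filter]
        exact ⟨hz1.2.1, hz1⟩
  calc rsize W A ω ≤ (insert a ((W.erase a).filter
        (fun y => ∃ x ∈ A', reachIn (W.erase a) ω x y))).card := Finset.card_le_card hsub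
    _ ≤ 1 + rsize (W.erase a) A' ω := by
        rw [add_comm]
        exact Finset.card_insert_le _ _

lemma nbrs_card_le {W : Finset V} {ω : Conf V} {a : V} :
    (W.filter (fun y => adjIn W ω a y)).card ≤ (ω ∩ starE W a).card := by
  classical
  have hsub : W.filter (fun y => adjIn W ω a y) ⊆
      (ω ∩ starE W a).image (fun e : EdgeT V =>
        if h : a ∈ (e : Sym2 V) then Sym2.Mem.other' h else a) := by
    intro y hy
    obtain ⟨hyW, hadj⟩ := Finset.mem_filter.mp hy
    obtain ⟨e, he, hee, hin⟩ := adjIn_insideE hadj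
    have hae : a ∈ (e : Sym2 V) := by rw [hee]; exact Sym2.mem_mk_left a y
    rw [Finset.mem_image]
    refine ⟨e, ?_, ?_⟩
    · rw [Finset.mem_inter]
      refine ⟨he, ?_⟩
      unfold starE
      rw [Finset.mem_filter]
      exact ⟨Finset.mem_univ _, hin, hae⟩
    · have hd : (if h : a ∈ (e : Sym2 V) then Sym2.Mem.other' h else a)
          = Sym2.Mem.other' hae := dif_pos hae
      have hoy : Sym2.Mem.other' hae = y :=
        Sym2.congr_right.mp ((Sym2.other_spec' hae).trans hee)
      exact hd.trans hoy
  calc (W.filter (fun y => adjIn W ω a y)).card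
      ≤ ((ω ∩ starE W a).image _).card := Finset.card_le_card hsub
    _ ≤ (ω ∩ starE W a).card := Finset.card_image_le

lemma starE_card_le {W : Finset V} {a : V} :
    (starE W a).card ≤ Fintype.card V := by
  classical
  have : (starE W a).card ≤ ((starE W a).image (fun e : EdgeT V =>
      if h : a ∈ (e : Sym2 V) then Sym2.Mem.other' h else a)).card := by
    apply le_of_eq
    symm
    apply Finset.card_image_of_injOn
    intro e₁ h₁ e₂ h₂ heq
    have ha₁ : a ∈ (e₁ : Sym2 V) := (Finset.mem_filter.mp h₁).2.2
    have ha₂ : a ∈ (e₂ : Sym2 V) := (Finset.mem_filter.mp h₂).2.2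
    have hd₁ : (if h : a ∈ (e₁ : Sym2 V) then Sym2.Mem.other' h else a)
        = Sym2.Mem.other' ha₁ := dif_pos ha₁
    have hd₂ : (if h : a ∈ (e₂ : Sym2 V) then Sym2.Mem.other' h else a)
        = Sym2.Mem.other' ha₂ := dif_pos ha₂
    dsimp only at heq
    rw [hd₁, hd₂] at heq
    apply Subtype.ext
    rw [← Sym2.other_spec' ha₁, ← Sym2.other_spec' ha₂, heq]
  calc (starE W a).card ≤ _ := this
    _ ≤ (univ : Finset V).card := Finset.card_le_card (Finset.subset_univ _)
    _ = Fintype.card V := Finset.card_univ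

lemma patch_inter {B β ω : Conf V} (hβ : β ⊆ B) : ((ω \ B) ∪ β) ∩ B = β := by
  ext e
  simp only [Finset.mem_inter, Finset.mem_union, Finset.mem_sdiff]
  constructor
  · rintro ⟨h1 | h2, hB⟩
    · exact absurd hB h1.2
    · exact h2
  · intro h
    exact ⟨Or.inr h, hβ h⟩

lemma adj_patch_star {W : Finset V} {ω β : Conf V} {a y : V} (hβ : β ⊆ starE W a) :
    adjIn W ((ω \ starE W a) ∪ β) a y ↔ adjIn W β a y := by
  constructor
  · intro h
    obtain ⟨e, he, hee, hin⟩ := adjIn_insideE h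
    have heB : e ∈ starE W a := by
      unfold starE
      rw [Finset.mem_filter]
      exact ⟨Finset.mem_univ _, hin, by rw [hee]; exact Sym2.mem_mk_left a y⟩
    have : e ∈ β := by
      have := Finset.mem_union.mp he
      rcases this with h1 | h2
      · exact absurd heB (Finset.mem_sdiff.mp h1).2
      · exact h2
    exact ⟨h.1, h.2.1, e, this, hee⟩
  · intro h
    obtain ⟨hx, hy, e, he, hee⟩ := h
    exact ⟨hx, hy, e, Finset.mem_union_right _ he, hee⟩

lemma erase_inside_star_disjoint {W : Finset V} {a : V} {e : EdgeT V}
    (h : insideE (W.erase a) e) : e ∉ starE W a := by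
  intro hmem
  have ha : a ∈ (e : Sym2 V) := (Finset.mem_filter.mp hmem).2.2
  have := h a ha
  exact (Finset.mem_erase.mp this).1 rfl

lemma patch_agree_erase {W : Finset V} {ω β : Conf V} {a : V} (hβ : β ⊆ starE W a) :
    ∀ e : EdgeT V, insideE (W.erase a) e →
      (e ∈ ((ω \ starE W a) ∪ β) ↔ e ∈ ω) := by
  intro e hin
  have heB : e ∉ starE W a := erase_inside_star_disjoint hin
  have heβ : e ∉ β := fun h => heB (hβ h)
  simp only [Finset.mem_union, Finset.mem_sdiff]
  constructor
  · rintro (⟨h, _⟩ | h)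
    · exact h
    · exact absurd h heβ
  · intro h
    exact Or.inl ⟨h, heB⟩


lemma cluster_dep {W : Finset V} {ω ω' : Conf V} {v : V} {S : Finset V} (hv : v ∈ W)
    (hagree : ∀ e, e ∈ touchE W S → (e ∈ ω ↔ e ∈ ω')) (hS : cluster W ω v = S) :
    cluster W ω' v = S := by
  classical
  have htouch : ∀ (b y : V), b ∈ S → (adjIn W ω b y ↔ adjIn W ω' b y) := by
    intro b y hb
    constructor
    · intro hadj
      obtain ⟨e, he, hee, hin⟩ := adjIn_insideE hadj
      have het : e ∈ touchE W S := by
        unfold touchE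
        rw [Finset.mem_filter]
        exact ⟨Finset.mem_univ _, hin, b, by rw [hee]; exact Sym2.mem_mk_left b y, hb⟩
      exact ⟨hadj.1, hadj.2.1, e, (hagree e het).mp he, hee⟩
    · intro hadj
      obtain ⟨e, he, hee, hin⟩ := adjIn_insideE hadj
      have het : e ∈ touchE W S := by
        unfold touchE
        rw [Finset.mem_filter]
        exact ⟨Finset.mem_univ _, hin, b, by rw [hee]; exact Sym2.mem_mk_left b y, hb⟩
      exact ⟨hadj.1, hadj.2.1, e, (hagree e het).mpr he, hee⟩
  have hvS : v ∈ S := hS ▸ mem_cluster_self hv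
  -- forward: ω-reachable implies ω'-reachable (staying in S)
  have sub1 : ∀ y, reachIn W ω v y → reachIn W ω' v y := by
    intro y h
    induction h with
    | refl => exact Relation.ReflTransGen.refl
    | @tail b c hvb hbc ih =>
      have hbS : b ∈ S := hS ▸ mem_cluster.mpr ⟨hbc.1, hvb⟩
      exact ih.tail ((htouch b c hbS).mp hbc)
  -- backward: ω'-reachable vertices are in S
  have sub2 : ∀ y, reachIn W ω' v y → y ∈ W → y ∈ S := by
    intro y h
    induction h with
    | refl => intro _; exact hvS
    | @tail b c hvb hbc ih =>
      intro hcW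
      have hbS : b ∈ S := ih hbc.1
      have hadj : adjIn W ω b c := (htouch b c hbS).mpr hbc
      have : c ∈ cluster W ω v := cluster_closed (hS ▸ hbS : b ∈ cluster W ω v) hadj
      exact hS ▸ this
  ext y
  rw [mem_cluster]
  constructor
  · rintro ⟨hyW, hr⟩
    exact sub2 y hr hyW
  · intro hyS
    have hy' : y ∈ cluster W ω v := hS ▸ hyS
    obtain ⟨hyW, hr⟩ := mem_cluster.mp hy'
    exact ⟨hyW, sub1 y hr⟩

lemma smc_dep {U : Finset V} {ω ω' : Conf V} (M : ℝ)
    (hagree : ∀ e : EdgeT V, insideE U e → (e ∈ ω ↔ e ∈ ω')) :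
    smc U ω M = smc U ω' M := by
  unfold smc
  congr 1
  apply Finset.filter_congr
  intro x _
  have hcs : csize U ω x = csize U ω' x := by
    unfold csize cluster
    congr 1
    apply Finset.filter_congr
    intro y _
    constructor
    · exact fun h => reachIn_congr hagree h
    · exact fun h => reachIn_congr (fun e he => (hagree e he).symm) h
  rw [hcs]

lemma touch_int_disjoint {W S : Finset V} : Disjoint (touchE W S) (intE (W \ S)) := by
  rw [Finset.disjoint_left]
  intro e he he'
  obtain ⟨x, hx, hxS⟩ := (Finset.mem_filter.mp he).2.2
  have : x ∈ W \ S := (Finset.mem_filter.mp he').2 x hx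
  exact (Finset.mem_sdiff.mp this).2 hxS

lemma rsize_singleton {W : Finset V} {ω : Conf V} {v : V} :
    rsize W {v} ω = csize W ω v := by
  unfold rsize csize cluster
  congr 1
  apply Finset.filter_congr
  intro y _
  simp


section TailBound

variable {V : Type*} [DecidableEq V] [Fintype V]

lemma rsize_congr {U A : Finset V} {ω ω' : Conf V}
    (h : ∀ e : EdgeT V, insideE U e → (e ∈ ω ↔ e ∈ ω')) :
    rsize U A ω = rsize U A ω' := by
  unfold rsize
  congr 1
  apply Finset.filter_congr
  intro y _
  constructor
  · rintro ⟨x, hx, hr⟩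
    exact ⟨x, hx, reachIn_congr h hr⟩
  · rintro ⟨x, hx, hr⟩
    exact ⟨x, hx, reachIn_congr (fun e he => (h e he).symm) hr⟩

lemma rsize_empty {W : Finset V} {ω : Conf V} : rsize W (∅ : Finset V) ω = 0 := by
  unfold rsize
  simp

lemma one_le_exp_of_nonneg {x : ℝ} (hx : 0 ≤ x) : (1:ℝ) ≤ Real.exp x := by
  calc (1:ℝ) = Real.exp 0 := Real.exp_zero.symm
  _ ≤ Real.exp x := Real.exp_le_exp.mpr hx

theorem tail_bound (p lam θ Irate : ℝ) (hp0 : 0 ≤ p) (hp1 : p ≤ 1) (hθ : 0 ≤ θ)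
    (hlam : p * (Fintype.card V : ℝ) ≤ lam)
    (hI : Irate ≤ θ - lam * (Real.exp θ - 1)) :
    ∀ (K : ℕ) (W A : Finset V) (j : ℕ), W.card ≤ K → A ⊆ W →
      Pint p (fun ω => ind (j ≤ rsize W A ω)) ≤ Real.exp (θ * A.card - Irate * j) := by
  have hlam0 : 0 ≤ lam := le_trans (by positivity) hlam
  have hexp1 : (1:ℝ) ≤ Real.exp θ := one_le_exp_of_nonneg hθ
  -- j = 0 helper
  have hj0 : ∀ (W A : Finset V), Pint p (fun ω => ind (0 ≤ rsize W A ω))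
      ≤ Real.exp (θ * A.card - Irate * (0:ℕ)) := by
    intro W A
    have h1 : Pint p (fun ω => ind (0 ≤ rsize W A ω)) ≤ 1 :=
      Pint_le_one hp0 hp1 (fun ω => ind_le_one)
    apply le_trans h1
    apply one_le_exp_of_nonneg
    push_cast
    have : (0:ℝ) ≤ θ * A.card := by positivity
    linarith
  intro K
  induction K with
  | zero =>
    intro W A j hWK hAW
    have hW : W = ∅ := Finset.card_eq_zero.mp (Nat.le_zero.mp hWK)
    cases j with
    | zero => exact hj0 W A
    | succ j' =>
      have hzero : (fun ω : Conf V => ind (j' + 1 ≤ rsize W A ω)) = fun _ => 0 := by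
        funext ω
        apply ind_of_not
        subst hW
        unfold rsize
        simp
      rw [hzero, Pint_zero]
      exact le_of_lt (Real.exp_pos _)
  | succ K ih =>
    intro W A j hWK hAW
    cases j with
    | zero => exact hj0 W A
    | succ j' =>
      rcases Finset.eq_empty_or_nonempty A with hA | ⟨a, ha⟩
      · have hzero : (fun ω : Conf V => ind (j' + 1 ≤ rsize W A ω)) = fun _ => 0 := by
          funext ω
          apply ind_of_not
          subst hA
          rw [rsize_empty]
          omega
        rw [hzero, Pint_zero]
        exact le_of_lt (Real.exp_pos _)
      · -- main step
        have haW : a ∈ W := hAW ha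
        set B := starE W a with hB
        rw [reveal p B (fun ω => ind (j' + 1 ≤ rsize W A ω))]
        -- bound each β-term
        have hterm : ∀ β ∈ B.powerset,
            Pint p (fun ω => ind (j' + 1 ≤ rsize W A ((ω \ B) ∪ β)))
              ≤ Real.exp (θ * ((A.card : ℝ) - 1 + β.card) - Irate * j') := by
          intro β hβ
          have hβB : β ⊆ B := Finset.mem_powerset.mp hβ
          set Aβ := (A ∪ W.filter (fun y => adjIn W β a y)).erase a with hAβ
          have hmono : ∀ ω : Conf V,
              ind (j' + 1 ≤ rsize W A ((ω \ B) ∪ β))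
                ≤ ind (j' ≤ rsize (W.erase a) Aβ ω) := by
            intro ω
            apply ind_mono
            intro hle
            set ω' := (ω \ B) ∪ β with hω'
            have hpeel := rsize_peel (ω := ω') ha hAW
            have hfiltereq : W.filter (fun y => adjIn W ω' a y)
                = W.filter (fun y => adjIn W β a y) := by
              apply Finset.filter_congr
              intro y _
              exact adj_patch_star hβB
            rw [hfiltereq] at hpeel
            have hcongr : rsize (W.erase a) Aβ ω' = rsize (W.erase a) Aβ ω :=
              rsize_congr (patch_agree_erase hβB)
            rw [hcongr] at hpeel
            omega
          have hAβW : Aβ ⊆ W.erase a := by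
            rw [hAβ]
            intro x hx
            obtain ⟨hxa, hxU⟩ := Finset.mem_erase.mp hx
            rcases Finset.mem_union.mp hxU with h1 | h2
            · exact Finset.mem_erase.mpr ⟨hxa, hAW h1⟩
            · exact Finset.mem_erase.mpr ⟨hxa, Finset.mem_of_mem_filter _ h2⟩
          have hWcard : (W.erase a).card ≤ K := by
            have := Finset.card_erase_of_mem haW
            omega
          have hstep := ih (W.erase a) Aβ j' hWcard hAβW
          have hAcard : (Aβ.card : ℝ) ≤ (A.card : ℝ) - 1 + β.card := by
            have h1 : Aβ.card = (A ∪ W.filter (fun y => adjIn W β a y)).card - 1 := by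
              rw [hAβ]
              apply Finset.card_erase_of_mem
              exact Finset.mem_union_left _ ha
            have h2 : (A ∪ W.filter (fun y => adjIn W β a y)).card
                ≤ A.card + (W.filter (fun y => adjIn W β a y)).card :=
              Finset.card_union_le _ _
            have h3 : (W.filter (fun y => adjIn W β a y)).card ≤ β.card := by
              calc (W.filter (fun y => adjIn W β a y)).card ≤ (β ∩ starE W a).card :=
                    nbrs_card_le
                _ ≤ β.card := Finset.card_le_card (Finset.inter_subset_left)
            have h4 : 1 ≤ (A ∪ W.filter (fun y => adjIn W β a y)).card := by
              have : a ∈ A ∪ W.filter (fun y => adjIn W β a y) := Finset.mem_union_left _ ha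
              exact Finset.card_pos.mpr ⟨a, this⟩
            have : Aβ.card + 1 ≤ A.card + β.card := by omega
            have hc := Nat.cast_le (α := ℝ) |>.mpr this
            push_cast at hc ⊢
            linarith
          calc Pint p (fun ω => ind (j' + 1 ≤ rsize W A ((ω \ B) ∪ β)))
              ≤ Pint p (fun ω => ind (j' ≤ rsize (W.erase a) Aβ ω)) :=
                Pint_mono hp0 hp1 hmono
            _ ≤ Real.exp (θ * Aβ.card - Irate * j') := hstep
            _ ≤ Real.exp (θ * ((A.card : ℝ) - 1 + β.card) - Irate * j') := by
                apply Real.exp_le_exp.mpr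
                have := mul_le_mul_of_nonneg_left hAcard hθ
                linarith
        -- sum the bounds
        have hwnonneg : ∀ β : Conf V, (0:ℝ) ≤ p ^ β.card * (1 - p) ^ (B.card - β.card) := by
          intro β
          have : (0:ℝ) ≤ 1 - p := by linarith
          positivity
        have hsum : (∑ β ∈ B.powerset, p ^ β.card * (1 - p) ^ (B.card - β.card) *
              Pint p (fun ω => ind (j' + 1 ≤ rsize W A ((ω \ B) ∪ β))))
            ≤ ∑ β ∈ B.powerset, p ^ β.card * (1 - p) ^ (B.card - β.card) *
              Real.exp (θ * ((A.card : ℝ) - 1 + β.card) - Irate * j') := by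
          apply Finset.sum_le_sum
          intro β hβ
          exact mul_le_mul_of_nonneg_left (hterm β hβ) (hwnonneg β)
        apply le_trans hsum
        -- compute the RHS sum
        have hrw : ∀ β ∈ B.powerset,
            p ^ β.card * (1 - p) ^ (B.card - β.card) *
              Real.exp (θ * ((A.card : ℝ) - 1 + β.card) - Irate * j')
            = ((p * Real.exp θ) ^ β.card * (1 - p) ^ (B.card - β.card)) *
              Real.exp (θ * ((A.card : ℝ) - 1) - Irate * j') := by
          intro β hβ
          rw [mul_pow]
          have hexppow : Real.exp (θ * (β.card : ℝ)) = (Real.exp θ) ^ (β.card : ℕ) := by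
            rw [← Real.exp_nat_mul]
            ring_nf
          have : Real.exp (θ * ((A.card : ℝ) - 1 + β.card) - Irate * j')
              = Real.exp (θ * (β.card:ℝ)) * Real.exp (θ * ((A.card : ℝ) - 1) - Irate * j') := by
            rw [← Real.exp_add]
            ring_nf
          rw [this, hexppow]
          ring
        rw [Finset.sum_congr rfl hrw, ← Finset.sum_mul, sum_powerset_weight]
        -- final: (p e^θ + (1-p))^{B.card} ≤ exp (lam (e^θ - 1))
        have hbase : p * Real.exp θ + (1 - p) = 1 + p * (Real.exp θ - 1) := by ring
        have hbase0 : (0:ℝ) ≤ 1 + p * (Real.exp θ - 1) := by nlinarith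
        have hpowle : (p * Real.exp θ + (1 - p)) ^ B.card
            ≤ Real.exp (lam * (Real.exp θ - 1)) := by
          rw [hbase]
          calc (1 + p * (Real.exp θ - 1)) ^ B.card
              ≤ (Real.exp (p * (Real.exp θ - 1))) ^ B.card := by
                apply pow_le_pow_left₀ hbase0
                linarith [Real.add_one_le_exp (p * (Real.exp θ - 1))]
            _ = Real.exp ((B.card : ℝ) * (p * (Real.exp θ - 1))) := by
                rw [← Real.exp_nat_mul]
            _ ≤ Real.exp (lam * (Real.exp θ - 1)) := by
                apply Real.exp_le_exp.mpr
                have hBcard : (B.card : ℝ) ≤ (Fintype.card V : ℝ) := by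
                  exact_mod_cast starE_card_le
                have h1 : (0:ℝ) ≤ Real.exp θ - 1 := by linarith
                have h2 : (B.card:ℝ) * p ≤ lam := by
                  calc (B.card:ℝ) * p ≤ (Fintype.card V : ℝ) * p := by
                        apply mul_le_mul_of_nonneg_right hBcard hp0
                    _ = p * (Fintype.card V : ℝ) := by ring
                    _ ≤ lam := hlam
                nlinarith
        calc (p * Real.exp θ + (1 - p)) ^ B.card *
              Real.exp (θ * ((A.card : ℝ) - 1) - Irate * j')
            ≤ Real.exp (lam * (Real.exp θ - 1)) *
              Real.exp (θ * ((A.card : ℝ) - 1) - Irate * j') := by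
              apply mul_le_mul_of_nonneg_right hpowle (le_of_lt (Real.exp_pos _))
          _ = Real.exp (lam * (Real.exp θ - 1) + (θ * ((A.card : ℝ) - 1) - Irate * j')) := by
              rw [← Real.exp_add]
          _ ≤ Real.exp (θ * A.card - Irate * (j' + 1 : ℕ)) := by
              apply Real.exp_le_exp.mpr
              push_cast
              nlinarith [hI]

end TailBound

section SMBound

variable {V : Type*} [DecidableEq V] [Fintype V]

lemma mem_intE {U : Finset V} {e : EdgeT V} : e ∈ intE U ↔ insideE U e := by
  unfold intE
  rw [Finset.mem_filter]
  simp

lemma geom_Ico_le {x : ℝ} (hx0 : 0 ≤ x) (hx1 : x < 1) (m n : ℕ) :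
    ∑ j ∈ Finset.Ico m n, x ^ j ≤ x ^ m / (1 - x) := by
  have h1x : (0:ℝ) < 1 - x := by linarith
  by_cases h : m ≤ n
  · rw [geom_sum_Ico (ne_of_lt hx1) h]
    have heq : (x ^ n - x ^ m) / (x - 1) = (x ^ m - x ^ n) / (1 - x) := by
      rw [div_eq_div_iff (by linarith : (x:ℝ) - 1 ≠ 0) (ne_of_gt h1x)]
      ring
    rw [heq]
    apply (div_le_div_iff_of_pos_right h1x).mpr
    have hxn : (0:ℝ) ≤ x ^ n := by positivity
    linarith

  · rw [Finset.Ico_eq_empty (by omega)]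
    simp only [Finset.sum_empty]
    positivity

lemma sum_ind_cluster_eq {W : Finset V} {ω : Conf V} {v : V} (T : Finset (Finset V)) :
    (∑ S ∈ T, ind (cluster W ω v = S)) = ind (cluster W ω v ∈ T) := by
  by_cases hc : cluster W ω v ∈ T
  · rw [ind_of hc]
    rw [Finset.sum_eq_single_of_mem (cluster W ω v) hc
      (fun S _ hne => ind_of_not (fun h => hne h.symm))]
    exact ind_of rfl
  · rw [ind_of_not hc]
    apply Finset.sum_eq_zero
    intro S hS
    exact ind_of_not (fun h => hc (h ▸ hS))

theorem sm_bound (p lam θ Irate t α M : ℝ)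
    (hp0 : 0 ≤ p) (hp1 : p ≤ 1) (hθ : 0 ≤ θ)
    (hlam : p * (Fintype.card V : ℝ) ≤ lam)
    (hI : Irate ≤ θ - lam * (Real.exp θ - 1))
    (hα : 0 < α) (ht : 0 < t) (hM1 : 1 ≤ M)
    (hs : t - α - Irate < 0)
    (hKEY : Real.exp (-α) + Real.exp θ * Real.exp ((t - α - Irate) * M) /
        (1 - Real.exp (t - α - Irate)) ≤ 1) :
    ∀ (K : ℕ) (W : Finset V), W.card ≤ K → ∀ R : ℝ,
      Pint p (fun ω => ind (R ≤ (smc W ω M : ℝ))) ≤ Real.exp (α * W.card - t * R) := by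
  -- trivial bound for empty W
  have hempty : ∀ (W : Finset V), W = ∅ → ∀ R : ℝ,
      Pint p (fun ω => ind (R ≤ (smc W ω M : ℝ))) ≤ Real.exp (α * W.card - t * R) := by
    intro W hW R
    subst hW
    by_cases hR : R ≤ 0
    · have h1 : Pint p (fun ω => ind (R ≤ (smc (∅:Finset V) ω M : ℝ))) ≤ 1 :=
        Pint_le_one hp0 hp1 (fun ω => ind_le_one)
      apply le_trans h1
      rw [← Real.exp_zero]
      apply Real.exp_le_exp.mpr
      simp only [Finset.card_empty, Nat.cast_zero, mul_zero, zero_sub]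
      nlinarith
    · push_neg at hR
      have hzero : (fun ω : Conf V => ind (R ≤ (smc (∅:Finset V) ω M : ℝ))) = fun _ => 0 := by
        funext ω
        apply ind_of_not
        have : smc (∅:Finset V) ω M = 0 := by
          unfold smc
          simp
        rw [this]
        push_neg
        exact_mod_cast hR
      rw [hzero, Pint_zero]
      exact le_of_lt (Real.exp_pos _)
  intro K
  induction K with
  | zero =>
    intro W hWK R
    exact hempty W (Finset.card_eq_zero.mp (Nat.le_zero.mp hWK)) R
  | succ K ih =>
    intro W hWK R
    rcases Finset.eq_empty_or_nonempty W with hW | ⟨v, hv⟩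
    · exact hempty W hW R
    · -- main step: peel the cluster of v
      set P := W.powerset.filter (fun S => v ∈ S) with hP
      -- pointwise partition
      have hpart : ∀ ω : Conf V,
          ind (R ≤ (smc W ω M : ℝ))
            = ∑ S ∈ P, ind (cluster W ω v = S) *
                ind (R - (if M < (S.card:ℝ) then (S.card:ℝ) else 0) ≤ (smc (W \ S) ω M : ℝ)) := by
        intro ω
        have hS₀ : cluster W ω v ∈ P := by
          rw [hP, Finset.mem_filter]
          exact ⟨Finset.mem_powerset.mpr cluster_subset, mem_cluster_self hv⟩
        rw [Finset.sum_eq_single_of_mem (cluster W ω v) hS₀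
          (fun S _ hne => by rw [ind_of_not (fun h => hne h.symm), zero_mul])]
        rw [ind_of rfl, one_mul]
        apply ind_congr
        have hsplit := smc_split hv M (ω := ω)
        have hcast : ((smc W ω M : ℕ) : ℝ)
            = (if M < ((cluster W ω v).card:ℝ) then ((cluster W ω v).card:ℝ) else 0)
              + ((smc (W \ cluster W ω v) ω M : ℕ) : ℝ) := by
          rw [hsplit]
          push_cast
          split <;> simp
        rw [hcast]
        constructor
        · intro h; linarith
        · intro h; linarith
      have hrw : Pint p (fun ω => ind (R ≤ (smc W ω M : ℝ)))
          = ∑ S ∈ P, Pint p (fun ω => ind (cluster W ω v = S) *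
              ind (R - (if M < (S.card:ℝ) then (S.card:ℝ) else 0) ≤ (smc (W \ S) ω M : ℝ))) := by
        rw [show (fun ω : Conf V => ind (R ≤ (smc W ω M : ℝ)))
            = (fun ω : Conf V => ∑ S ∈ P, ind (cluster W ω v = S) *
                ind (R - (if M < (S.card:ℝ) then (S.card:ℝ) else 0) ≤ (smc (W \ S) ω M : ℝ)))
          from funext hpart]
        exact Pint_sum p P _
      rw [hrw]
      -- independence per S
      have hindep : ∀ S ∈ P,
          Pint p (fun ω => ind (cluster W ω v = S) *
              ind (R - (if M < (S.card:ℝ) then (S.card:ℝ) else 0) ≤ (smc (W \ S) ω M : ℝ)))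
            = Pint p (fun ω => ind (cluster W ω v = S)) *
              Pint p (fun ω => ind (R - (if M < (S.card:ℝ) then (S.card:ℝ) else 0)
                ≤ (smc (W \ S) ω M : ℝ))) := by
        intro S hS
        apply Pint_indep p touch_int_disjoint
        · intro ω ω' hagree
          apply ind_congr
          constructor
          · exact cluster_dep hv (fun e he => hagree e he) 
          · exact cluster_dep hv (fun e he => (hagree e he).symm)
        · intro ω ω' hagree
          apply ind_congr
          have : smc (W \ S) ω M = smc (W \ S) ω' M :=
            smc_dep M (fun e he => hagree e (mem_intE.mpr he))
          rw [this]
      rw [Finset.sum_congr rfl hindep]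
      -- apply inner induction hypothesis
      have hq0 : ∀ S ∈ P, (0:ℝ) ≤ Pint p (fun ω => ind (cluster W ω v = S)) := by
        intro S _
        exact Pint_nonneg hp0 hp1 (fun ω => ind_nonneg)
      have hcardS : ∀ S ∈ P, 1 ≤ S.card ∧ S ⊆ W := by
        intro S hS
        rw [hP, Finset.mem_filter] at hS
        have h1 : S ⊆ W := Finset.mem_powerset.mp hS.1
        exact ⟨Finset.card_pos.mpr ⟨v, hS.2⟩, h1⟩
      have hih : ∀ S ∈ P,
          Pint p (fun ω => ind (R - (if M < (S.card:ℝ) then (S.card:ℝ) else 0)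
              ≤ (smc (W \ S) ω M : ℝ)))
            ≤ Real.exp (α * W.card - t * R) *
              Real.exp ((if M < (S.card:ℝ) then t * (S.card:ℝ) else 0) - α * S.card) := by
        intro S hS
        obtain ⟨hS1, hSW⟩ := hcardS S hS
        have hcards : (W \ S).card = W.card - S.card := Finset.card_sdiff_of_subset hSW
        have hle : (W \ S).card ≤ K := by
          have := Finset.card_le_card hSW
          omega
        have h := ih (W \ S) hle (R - (if M < (S.card:ℝ) then (S.card:ℝ) else 0))
        apply le_trans h
        apply le_of_eq
        rw [← Real.exp_add]
        congr 1
        have hcast : ((W \ S).card : ℝ) = (W.card : ℝ) - (S.card : ℝ) := by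
          rw [hcards]
          have := Finset.card_le_card hSW
          push_cast [Nat.cast_sub this]
          ring
        rw [hcast]
        split <;> ring
      -- assemble
      have hsum1 : (∑ S ∈ P, Pint p (fun ω => ind (cluster W ω v = S)) *
            Pint p (fun ω => ind (R - (if M < (S.card:ℝ) then (S.card:ℝ) else 0)
              ≤ (smc (W \ S) ω M : ℝ))))
          ≤ Real.exp (α * W.card - t * R) *
            ∑ S ∈ P, Pint p (fun ω => ind (cluster W ω v = S)) *
              Real.exp ((if M < (S.card:ℝ) then t * (S.card:ℝ) else 0) - α * S.card) := by
        rw [Finset.mul_sum]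
        apply Finset.sum_le_sum
        intro S hS
        have h1 := mul_le_mul_of_nonneg_left (hih S hS) (hq0 S hS)
        apply le_trans h1
        apply le_of_eq
        ring
      apply le_trans hsum1
      -- it remains to bound the inner sum by 1
      have hq_total : (∑ S ∈ P, Pint p (fun ω => ind (cluster W ω v = S))) = 1 := by
        rw [← Pint_sum p P (fun S ω => ind (cluster W ω v = S))]
        have : (fun ω : Conf V => ∑ S ∈ P, ind (cluster W ω v = S)) = fun _ => (1:ℝ) := by
          funext ω
          rw [sum_ind_cluster_eq]
          apply ind_of
          rw [hP, Finset.mem_filter]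
          exact ⟨Finset.mem_powerset.mpr cluster_subset, mem_cluster_self hv⟩
        rw [this, Pint_one]
      have hinner : (∑ S ∈ P, Pint p (fun ω => ind (cluster W ω v = S)) *
            Real.exp ((if M < (S.card:ℝ) then t * (S.card:ℝ) else 0) - α * S.card)) ≤ 1 := by
        rw [← Finset.sum_filter_add_sum_filter_not P (fun S => M < (S.card:ℝ))]
        have hsmall : (∑ S ∈ P.filter (fun S => ¬ M < (S.card:ℝ)),
              Pint p (fun ω => ind (cluster W ω v = S)) *
              Real.exp ((if M < (S.card:ℝ) then t * (S.card:ℝ) else 0) - α * S.card))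
            ≤ Real.exp (-α) := by
          have hb : ∀ S ∈ P.filter (fun S => ¬ M < (S.card:ℝ)),
              Pint p (fun ω => ind (cluster W ω v = S)) *
                Real.exp ((if M < (S.card:ℝ) then t * (S.card:ℝ) else 0) - α * S.card)
              ≤ Pint p (fun ω => ind (cluster W ω v = S)) * Real.exp (-α) := by
            intro S hS
            have hSP : S ∈ P := Finset.mem_of_mem_filter _ hS
            have hSbig : ¬ M < (S.card:ℝ) := (Finset.mem_filter.mp hS).2
            apply mul_le_mul_of_nonneg_left _ (hq0 S hSP)
            rw [if_neg hSbig, zero_sub]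
            apply Real.exp_le_exp.mpr
            have h1 : (1:ℝ) ≤ (S.card:ℝ) := by exact_mod_cast (hcardS S hSP).1
            nlinarith
          apply le_trans (Finset.sum_le_sum hb)
          rw [← Finset.sum_mul]
          have hle1 : (∑ S ∈ P.filter (fun S => ¬ M < (S.card:ℝ)),
              Pint p (fun ω => ind (cluster W ω v = S))) ≤ 1 := by
            rw [← hq_total]
            apply Finset.sum_le_sum_of_subset_of_nonneg (Finset.filter_subset _ _)
            intro S hS _
            exact hq0 S hS
          have := Real.exp_pos (-α)
          nlinarith
        have hbig : (∑ S ∈ P.filter (fun S => M < (S.card:ℝ)),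
              Pint p (fun ω => ind (cluster W ω v = S)) *
              Real.exp ((if M < (S.card:ℝ) then t * (S.card:ℝ) else 0) - α * S.card))
            ≤ Real.exp θ * Real.exp ((t - α - Irate) * M) /
                (1 - Real.exp (t - α - Irate)) := by
          set x := Real.exp (t - α - Irate) with hxdef
          have hx0 : (0:ℝ) < x := Real.exp_pos _
          have hx1 : x < 1 := by
            rw [hxdef]
            exact Real.exp_lt_one_iff.mpr hs
          have hM0 : (0:ℝ) ≤ M := by linarith
          set m₀ := Nat.floor M + 1 with hm₀
          -- rewrite the if inside the big sum
          have hifrw : ∀ S ∈ P.filter (fun S => M < (S.card:ℝ)),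
              Pint p (fun ω => ind (cluster W ω v = S)) *
                Real.exp ((if M < (S.card:ℝ) then t * (S.card:ℝ) else 0) - α * S.card)
              = Pint p (fun ω => ind (cluster W ω v = S)) *
                Real.exp ((t - α) * (S.card:ℝ)) := by
            intro S hS
            have hSbig : M < (S.card:ℝ) := (Finset.mem_filter.mp hS).2
            rw [if_pos hSbig]
            congr 2
            ring
          rw [Finset.sum_congr rfl hifrw]
          -- group by cardinality
          set T' := (Finset.range (W.card + 1)).filter (fun j : ℕ => M < (j:ℝ)) with hT'
          have hmaps : ∀ S ∈ P.filter (fun S => M < (S.card:ℝ)), S.card ∈ T' := by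
            intro S hS
            have hSP : S ∈ P := Finset.mem_of_mem_filter _ hS
            have hSbig : M < (S.card:ℝ) := (Finset.mem_filter.mp hS).2
            rw [hT', Finset.mem_filter, Finset.mem_range]
            refine ⟨?_, hSbig⟩
            have := Finset.card_le_card (hcardS S hSP).2
            omega
          rw [← Finset.sum_fiberwise_of_maps_to hmaps]
          -- bound each fiber
          have hfiber : ∀ j ∈ T',
              (∑ S ∈ (P.filter (fun S => M < (S.card:ℝ))).filter (fun S => S.card = j),
                Pint p (fun ω => ind (cluster W ω v = S)) *
                  Real.exp ((t - α) * (S.card:ℝ)))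
              ≤ Real.exp θ * x ^ j := by
            intro j hj
            have hjrw : ∀ S ∈ (P.filter (fun S => M < (S.card:ℝ))).filter (fun S => S.card = j),
                Pint p (fun ω => ind (cluster W ω v = S)) * Real.exp ((t - α) * (S.card:ℝ))
                = Pint p (fun ω => ind (cluster W ω v = S)) * Real.exp ((t - α) * (j:ℝ)) := by
              intro S hS
              rw [(Finset.mem_filter.mp hS).2]
            rw [Finset.sum_congr rfl hjrw, ← Finset.sum_mul]
            have hqsum : (∑ S ∈ (P.filter (fun S => M < (S.card:ℝ))).filter
                  (fun S => S.card = j),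
                Pint p (fun ω => ind (cluster W ω v = S))) ≤ Real.exp (θ - Irate * j) := by
              rw [← Pint_sum p _ (fun S ω => ind (cluster W ω v = S))]
              have hptw : ∀ ω : Conf V,
                  (∑ S ∈ (P.filter (fun S => M < (S.card:ℝ))).filter (fun S => S.card = j),
                    ind (cluster W ω v = S)) ≤ ind (j ≤ rsize W {v} ω) := by
                intro ω
                rw [sum_ind_cluster_eq]
                apply ind_mono
                intro hmem
                have hcardj : (cluster W ω v).card = j :=
                  (Finset.mem_filter.mp hmem).2
                rw [rsize_singleton]
                unfold csize
                omega
              calc Pint p (fun ω => ∑ S ∈ (P.filter (fun S => M < (S.card:ℝ))).filter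
                    (fun S => S.card = j), ind (cluster W ω v = S))
                  ≤ Pint p (fun ω => ind (j ≤ rsize W {v} ω)) := Pint_mono hp0 hp1 hptw
                _ ≤ Real.exp (θ * (({v} : Finset V).card : ℝ) - Irate * j) :=
                    tail_bound p lam θ Irate hp0 hp1 hθ hlam hI W.card W {v} j (le_refl _)
                      (Finset.singleton_subset_iff.mpr hv)
                _ = Real.exp (θ - Irate * j) := by
                    rw [Finset.card_singleton]
                    norm_num
            have hqs0 : (0:ℝ) ≤ ∑ S ∈ (P.filter (fun S => M < (S.card:ℝ))).filter
                  (fun S => S.card = j),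
                Pint p (fun ω => ind (cluster W ω v = S)) := by
              apply Finset.sum_nonneg
              intro S hS
              exact Pint_nonneg hp0 hp1 (fun ω => ind_nonneg)
            calc (∑ S ∈ (P.filter (fun S => M < (S.card:ℝ))).filter (fun S => S.card = j),
                  Pint p (fun ω => ind (cluster W ω v = S))) * Real.exp ((t - α) * (j:ℝ))
                ≤ Real.exp (θ - Irate * j) * Real.exp ((t - α) * (j:ℝ)) := by
                  apply mul_le_mul_of_nonneg_right hqsum (le_of_lt (Real.exp_pos _))
              _ = Real.exp θ * x ^ j := by
                  rw [hxdef, ← Real.exp_nat_mul, ← Real.exp_add, ← Real.exp_add]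
                  congr 1
                  push_cast
                  ring
          calc (∑ j ∈ T', ∑ S ∈ (P.filter (fun S => M < (S.card:ℝ))).filter
                (fun S => S.card = j),
              Pint p (fun ω => ind (cluster W ω v = S)) * Real.exp ((t - α) * (S.card:ℝ)))
              ≤ ∑ j ∈ T', Real.exp θ * x ^ j := Finset.sum_le_sum hfiber
            _ = Real.exp θ * ∑ j ∈ T', x ^ j := by rw [Finset.mul_sum]
            _ ≤ Real.exp θ * (x ^ m₀ / (1 - x)) := by
                apply mul_le_mul_of_nonneg_left _ (le_of_lt (Real.exp_pos _))
                have hsub : T' ⊆ Finset.Ico m₀ (W.card + 1) := by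
                  intro j hj
                  rw [hT', Finset.mem_filter, Finset.mem_range] at hj
                  rw [Finset.mem_Ico]
                  refine ⟨?_, hj.1⟩
                  rw [hm₀]
                  have := (Nat.floor_lt hM0).mpr hj.2
                  omega
                calc (∑ j ∈ T', x ^ j) ≤ ∑ j ∈ Finset.Ico m₀ (W.card + 1), x ^ j := by
                      apply Finset.sum_le_sum_of_subset_of_nonneg hsub
                      intro j _ _
                      positivity
                  _ ≤ x ^ m₀ / (1 - x) := geom_Ico_le (le_of_lt hx0) hx1 _ _
            _ ≤ Real.exp θ * Real.exp ((t - α - Irate) * M) / (1 - x) := by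
                rw [mul_div_assoc]
                apply mul_le_mul_of_nonneg_left _ (le_of_lt (Real.exp_pos _))
                apply (div_le_div_iff_of_pos_right (by linarith : (0:ℝ) < 1 - x)).mpr
                rw [hxdef, ← Real.exp_nat_mul]
                apply Real.exp_le_exp.mpr
                have hm₀M : M ≤ (m₀:ℝ) := by
                  rw [hm₀]
                  push_cast
                  have := Nat.lt_floor_add_one M
                  linarith
                nlinarith
        linarith
      calc Real.exp (α * W.card - t * R) *
            ∑ S ∈ P, Pint p (fun ω => ind (cluster W ω v = S)) *
              Real.exp ((if M < (S.card:ℝ) then t * (S.card:ℝ) else 0) - α * S.card)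
          ≤ Real.exp (α * W.card - t * R) * 1 := by
            apply mul_le_mul_of_nonneg_left hinner (le_of_lt (Real.exp_pos _))
        _ = Real.exp (α * W.card - t * R) := mul_one _

end SMBound


end ERSub

end


noncomputable section
namespace ERSub

open Finset

variable {V : Type*} [DecidableEq V] [Fintype V]

lemma reach_bridge (ω : Conf V) (x y : V) :
    (graphOf ω).Reachable x y ↔ reachIn Finset.univ ω x y := by
  rw [SimpleGraph.reachable_iff_reflTransGen]
  have hrel : (graphOf ω).Adj = adjIn Finset.univ ω := by
    funext a b
    apply propext
    constructor
    · intro h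
      rw [graphOf, SimpleGraph.fromEdgeSet_adj] at h
      obtain ⟨hmem, hne⟩ := h
      obtain ⟨e, heω, hee⟩ := hmem
      refine ⟨Finset.mem_univ a, Finset.mem_univ b, e, ?_, hee⟩
      exact_mod_cast heω
    · rintro ⟨-, -, e, heω, hee⟩
      rw [graphOf, SimpleGraph.fromEdgeSet_adj]
      constructor
      · exact ⟨e, by exact_mod_cast heω, hee⟩
      · intro hab
        apply e.2
        rw [hee, hab]
        exact Sym2.mk_isDiag_iff.mpr rfl
  rw [hrel]
  rfl

lemma clusterSize_eq (ω : Conf V) (x : V) : clusterSize ω x = csize Finset.univ ω x := by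
  unfold clusterSize csize cluster
  have hset : {y | (graphOf ω).Reachable x y} = {y | reachIn Finset.univ ω x y} := by
    ext y
    exact reach_bridge ω x y
  rw [hset]
  rw [Nat.card_eq_fintype_card, Fintype.card_subtype]
  simp only [Set.mem_setOf_eq]

lemma SMcard_eq (ω : Conf V) (M : ℝ) : SMcard ω M = smc Finset.univ ω M := by
  unfold SMcard smc
  congr 1
  apply Finset.filter_congr
  intro x _
  rw [clusterSize_eq]

end ERSub
end

/-- **Lemma 3.1.** For `G(n,p)` with `np = λ < 1` fixed, there is `c > 0` such that for every
`ρ > 0` there is `M₀(λ,ρ)` such that for every `M ≥ M₀` there is a constant `C` with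
`π_{n,λ}(|S_M| ≥ ρn) ≤ C e^{-cρn}` for all `n`. -/
theorem er_subcritical_SM (lam : ℝ) (h0 : 0 < lam) (hlam : lam < 1) :
    ∃ c > (0 : ℝ), ∀ ρ : ℝ, 0 < ρ → ∃ M₀ : ℝ, ∀ M ≥ M₀, ∃ C > (0 : ℝ), ∀ n : ℕ,
      fkProb n (lam / n) 1 {ω | ρ * n ≤ (SMcard ω M : ℝ)} ≤ C * Real.exp (-c * ρ * n) := by
  classical
  have hloglt : Real.log lam < lam - 1 := Real.log_lt_sub_one_of_pos h0 (ne_of_lt hlam)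
  set Irate := lam - 1 - Real.log lam with hIrate
  have hIrate0 : 0 < Irate := by rw [hIrate]; linarith
  set θ := -Real.log lam with hθdef
  have hlog0 : Real.log lam < 0 := Real.log_neg h0 hlam
  have hθ0 : 0 ≤ θ := by rw [hθdef]; linarith
  have hIeq : Irate = θ - lam * (Real.exp θ - 1) := by
    rw [hIrate, hθdef, Real.exp_neg, Real.exp_log h0]
    field_simp
    ring
  refine ⟨Irate / 4, by linarith, ?_⟩
  intro ρ hρ
  set t := Irate / 2 with htdef
  have ht0 : 0 < t := by rw [htdef]; linarith
  set α := min (Irate / 4) (Irate * ρ / 4) with hαdef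
  have hα0 : 0 < α := by
    apply lt_min
    · linarith
    · nlinarith [hIrate0, hρ]
  have hs0 : t - α - Irate < 0 := by rw [htdef]; linarith
  have hx1 : Real.exp (t - α - Irate) < 1 := Real.exp_lt_one_iff.mpr hs0
  have hden : 0 < 1 - Real.exp (t - α - Irate) := by linarith
  have hexpα : Real.exp (-α) < 1 := Real.exp_lt_one_iff.mpr (by linarith)
  have hden2 : 0 < 1 - Real.exp (-α) := by linarith
  refine ⟨max 1 ((θ - Real.log ((1 - Real.exp (t - α - Irate)) * (1 - Real.exp (-α))))
    / (Irate - t + α)), ?_⟩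
  intro M hM
  have hpos : 0 < Irate - t + α := by rw [htdef]; linarith
  have hM1 : 1 ≤ M := le_trans (le_max_left _ _) hM
  have hKEY : Real.exp (-α) + Real.exp θ * Real.exp ((t - α - Irate) * M) /
      (1 - Real.exp (t - α - Irate)) ≤ 1 := by
    have h1 : (θ - Real.log ((1 - Real.exp (t - α - Irate)) * (1 - Real.exp (-α))))
        / (Irate - t + α) ≤ M := le_trans (le_max_right _ _) hM
    rw [div_le_iff₀ hpos] at h1
    have h2 : θ + (t - α - Irate) * M
        ≤ Real.log ((1 - Real.exp (t - α - Irate)) * (1 - Real.exp (-α))) := by nlinarith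
    have h3 : Real.exp (θ + (t - α - Irate) * M)
        ≤ (1 - Real.exp (t - α - Irate)) * (1 - Real.exp (-α)) := by
      calc Real.exp (θ + (t - α - Irate) * M)
          ≤ Real.exp (Real.log ((1 - Real.exp (t - α - Irate)) * (1 - Real.exp (-α)))) :=
            Real.exp_le_exp.mpr h2
        _ = (1 - Real.exp (t - α - Irate)) * (1 - Real.exp (-α)) :=
            Real.exp_log (mul_pos hden hden2)
    have h4 : Real.exp θ * Real.exp ((t - α - Irate) * M) / (1 - Real.exp (t - α - Irate))
        ≤ 1 - Real.exp (-α) := by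
      rw [div_le_iff₀ hden]
      calc Real.exp θ * Real.exp ((t - α - Irate) * M)
          = Real.exp (θ + (t - α - Irate) * M) := (Real.exp_add _ _).symm
        _ ≤ (1 - Real.exp (t - α - Irate)) * (1 - Real.exp (-α)) := h3
        _ = (1 - Real.exp (-α)) * (1 - Real.exp (t - α - Irate)) := by ring
    linarith
  refine ⟨1, one_pos, ?_⟩
  intro n
  rcases Nat.eq_zero_or_pos n with hn0 | hn1
  · -- the case n = 0 : the probability equals 1 and the bound is 1
    subst hn0
    haveI hS2 : IsEmpty (Sym2 (Fin 0)) := by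
      constructor
      intro z
      induction z using Sym2.ind with
      | _ x y => exact x.elim0
    haveI hET : IsEmpty (EdgeT (Fin 0)) := ⟨fun e => hS2.false e.1⟩
    haveI : Unique (Conf (Fin 0)) := ⟨⟨∅⟩, fun ω => Finset.eq_empty_of_isEmpty ω⟩
    have huniv : (Finset.univ : Finset (Conf (Fin 0))) = {∅} := by
      rw [Finset.univ_unique]
      congr 1
      exact Finset.eq_empty_of_isEmpty _
    have hmem : (∅ : Conf (Fin 0)) ∈ {ω : Conf (Fin 0) | ρ * ((0:ℕ):ℝ) ≤ (SMcard ω M : ℝ)} := by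
      rw [Set.mem_setOf_eq]
      push_cast
      have : (0:ℝ) ≤ (SMcard (∅ : Conf (Fin 0)) M : ℝ) := Nat.cast_nonneg _
      linarith
    have hwone : fkWeight (Fin 0) (lam / ((0:ℕ):ℝ)) 1 ∅ = 1 := by
      unfold fkWeight
      rw [one_pow]
      simp
    unfold fkProb probOf
    rw [huniv, Finset.filter_singleton, if_pos hmem, Finset.sum_singleton,
      hwone, div_one, one_mul]
    push_cast
    rw [mul_zero, Real.exp_zero]
  · -- the main case n ≥ 1
    have hn : (0:ℝ) < (n:ℝ) := by exact_mod_cast hn1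
    have hp0 : 0 ≤ lam / (n:ℝ) := by positivity
    have hp1 : lam / (n:ℝ) ≤ 1 := by
      rw [div_le_one hn]
      have h1n : (1:ℝ) ≤ (n:ℝ) := by exact_mod_cast hn1
      linarith
    have hlamcard : (lam / (n:ℝ)) * (Fintype.card (Fin n) : ℝ) ≤ lam := by
      rw [Fintype.card_fin, div_mul_cancel₀ lam (ne_of_gt hn)]
    have hbound := ERSub.sm_bound (lam / (n:ℝ)) lam θ Irate t α M hp0 hp1 hθ0 hlamcard
      (le_of_eq hIeq) hα0 ht0 hM1 hs0 hKEY n Finset.univ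
      (by rw [Finset.card_univ, Fintype.card_fin]) (ρ * n)
    have hdenom : (∑ ω : Conf (Fin n), fkWeight (Fin n) (lam / (n:ℝ)) 1 ω) = 1 := by
      have hw : ∀ ω : Conf (Fin n), fkWeight (Fin n) (lam / (n:ℝ)) 1 ω
          = (lam / (n:ℝ)) ^ ω.card *
            (1 - lam / (n:ℝ)) ^ (Fintype.card (EdgeT (Fin n)) - ω.card) * 1 := by
        intro ω
        unfold fkWeight
        rw [one_pow]
      calc (∑ ω : Conf (Fin n), fkWeight (Fin n) (lam / (n:ℝ)) 1 ω)
          = ERSub.Pint (lam / (n:ℝ)) (fun _ : Conf (Fin n) => (1:ℝ)) :=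
            Finset.sum_congr rfl (fun ω _ => hw ω)
        _ = 1 := ERSub.Pint_one _
    have hnum : (∑ ω ∈ Finset.univ.filter
          (fun ω : Conf (Fin n) => ω ∈ {ω' : Conf (Fin n) | ρ * (n:ℝ) ≤ (SMcard ω' M : ℝ)}),
          fkWeight (Fin n) (lam / (n:ℝ)) 1 ω)
        = ERSub.Pint (lam / (n:ℝ))
            (fun ω : Conf (Fin n) =>
              ERSub.ind (ρ * (n:ℝ) ≤ (ERSub.smc (Finset.univ : Finset (Fin n)) ω M : ℝ))) := by
      rw [Finset.sum_filter]
      unfold ERSub.Pint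
      apply Finset.sum_congr rfl
      intro ω _
      have hevent : (ω ∈ {ω' : Conf (Fin n) | ρ * (n:ℝ) ≤ (SMcard ω' M : ℝ)})
          ↔ ρ * (n:ℝ) ≤ (ERSub.smc Finset.univ ω M : ℝ) := by
        rw [Set.mem_setOf_eq, ERSub.SMcard_eq]
      unfold fkWeight ERSub.ind
      rw [one_pow]
      beta_reduce
      by_cases h : ω ∈ {ω' : Conf (Fin n) | ρ * (n:ℝ) ≤ (SMcard ω' M : ℝ)}
      · rw [if_pos h, if_pos (hevent.mp h), mul_one]
      · rw [if_neg h, if_neg (fun hh => h (hevent.mpr hh)), mul_zero]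
    unfold fkProb probOf
    rw [hnum, hdenom, div_one, one_mul]
    apply le_trans hbound
    apply Real.exp_le_exp.mpr
    rw [Finset.card_univ, Fintype.card_fin]
    have hαle : α ≤ Irate * ρ / 4 := min_le_right _ _
    have hncast : (0:ℝ) ≤ (n:ℝ) := le_of_lt hn
    have h5 : α * (n:ℝ) ≤ (Irate * ρ / 4) * (n:ℝ) := mul_le_mul_of_nonneg_right hαle hncast
    rw [htdef]
    nlinarith [h5]
end

section
/- Let ω be a fixed edge configuration on n vertices, let M > 0, ε > 0, and suppose |S_M(ω)| ≤ εn. Independently color each cluster of ω collectively red with probability α ∈ [0,1], and let R be the set of all red vertices. Then for every δ > 0, the probability that ||R| − αn| ≥ (ε + δ)n is at most 2·exp(−δ²·n/(2M²)). -/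
open scoped Classical

noncomputable section ClusterColoringAux

open Finset

noncomputable instance fintypeConnectedComponent {W : Type*} [Finite W] (G : SimpleGraph W) :
    Fintype G.ConnectedComponent := Fintype.ofFinite _

/-- Hoeffding-type two-point mgf bound. -/
lemma two_point_mgf (α u : ℝ) (h0 : 0 ≤ α) (h1 : α ≤ 1) :
    α * Real.exp (u * (1 - α)) + (1 - α) * Real.exp (u * (0 - α)) ≤ Real.exp (u ^ 2 / 2) := by
  have key : ∀ y : ℝ, -1 ≤ y → y ≤ 1 →
      Real.exp (u * y) ≤ (1 + y) / 2 * Real.exp u + (1 - y) / 2 * Real.exp (-u) := by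
    intro y hy1 hy2
    have ha : (0:ℝ) ≤ (1 + y) / 2 := by linarith
    have hb : (0:ℝ) ≤ (1 - y) / 2 := by linarith
    have hab : (1 + y) / 2 + (1 - y) / 2 = (1:ℝ) := by ring
    have h := convexOn_exp.2 (Set.mem_univ u) (Set.mem_univ (-u)) ha hb hab
    simp only [smul_eq_mul] at h
    have harg : (1 + y) / 2 * u + (1 - y) / 2 * (-u) = u * y := by ring
    rw [harg] at h
    exact h
  have k1 := key (1 - α) (by linarith) (by linarith)
  have k2 := key (0 - α) (by linarith) (by linarith)
  have hcosh : (Real.exp u + Real.exp (-u)) / 2 ≤ Real.exp (u ^ 2 / 2) := by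
    have := Real.cosh_le_exp_half_sq u
    rwa [Real.cosh_eq] at this
  nlinarith [mul_le_mul_of_nonneg_left k1 h0,
    mul_le_mul_of_nonneg_left k2 (by linarith : (0:ℝ) ≤ 1 - α)]

/-- Chernoff bound for a weighted sum of independent Bernoulli variables. -/
lemma bernoulli_chernoff {ι : Type*} [Fintype ι] (α M δ N σ : ℝ)
    (h0 : 0 ≤ α) (h1 : α ≤ 1) (hM : 0 < M) (hδ : 0 < δ) (hN : 0 ≤ N)
    (hcard : (Fintype.card ι : ℝ) ≤ N)
    (s : ι → ℝ) (hs : ∀ i, |s i| ≤ M) (hσ : σ = 1 ∨ σ = -1) :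
    ∑ g ∈ univ.filter (fun g : ι → Bool =>
        δ * N ≤ σ * ((∑ i, s i * (if g i then 1 else 0)) - α * ∑ i, s i)),
      ∏ i, (if g i then α else 1 - α)
    ≤ Real.exp (-δ ^ 2 * N / (2 * M ^ 2)) := by
  set t : ℝ := δ / M ^ 2 with htdef
  have ht : 0 < t := div_pos hδ (by positivity)
  have hwt : ∀ (g : ι → Bool), (0:ℝ) ≤ ∏ i, (if g i then α else 1 - α) := by
    intro g
    exact prod_nonneg fun i _ => by by_cases h : g i <;> simp [h] <;> linarith
  set T : (ι → Bool) → ℝ := fun g => σ * ((∑ i, s i * (if g i then 1 else 0)) - α * ∑ i, s i)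
    with hT
  set f : ι → Bool → ℝ := fun i b => (if b then α else 1 - α) *
      Real.exp (t * σ * (s i * (if b then 1 else 0) - α * s i)) with hf
  have step1 : ∑ g ∈ univ.filter (fun g : ι → Bool => δ * N ≤ T g),
      ∏ i, (if g i then α else 1 - α)
      ≤ Real.exp (-(t * (δ * N))) * ∑ g : ι → Bool,
        (∏ i, (if g i then α else 1 - α)) * Real.exp (t * T g) := by
    rw [mul_sum, sum_filter]
    refine sum_le_sum fun g _ => ?_
    by_cases hg : δ * N ≤ T g
    · rw [if_pos hg]
      have h1' : (1:ℝ) ≤ Real.exp (-(t * (δ * N))) * Real.exp (t * T g) := by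
        rw [← Real.exp_add]
        have : 0 ≤ -(t * (δ * N)) + t * T g := by nlinarith
        calc (1:ℝ) = Real.exp 0 := by simp
        _ ≤ _ := Real.exp_le_exp.2 this
      calc (∏ i, if g i then α else 1 - α)
          = (∏ i, if g i then α else 1 - α) * 1 := by ring
        _ ≤ (∏ i, if g i then α else 1 - α) *
            (Real.exp (-(t * (δ * N))) * Real.exp (t * T g)) :=
            mul_le_mul_of_nonneg_left h1' (hwt g)
        _ = Real.exp (-(t * (δ * N))) * ((∏ i, if g i then α else 1 - α) * Real.exp (t * T g)) := by
            ring
    · rw [if_neg hg]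
      exact mul_nonneg (Real.exp_nonneg _) (mul_nonneg (hwt g) (Real.exp_nonneg _))
  have hσ2 : σ ^ 2 = 1 := by rcases hσ with h | h <;> rw [h] <;> ring
  have step2 : ∑ g : ι → Bool, (∏ i, (if g i then α else 1 - α)) * Real.exp (t * T g)
      = ∏ i, (f i true + f i false) := by
    have harg : ∀ g : ι → Bool, t * T g
        = ∑ i, t * σ * (s i * (if g i then 1 else 0) - α * s i) := by
      intro g
      rw [hT]
      have : ∑ i, t * σ * (s i * (if g i then 1 else 0) - α * s i)
          = t * σ * ∑ i, (s i * (if g i then 1 else 0) - α * s i) := by rw [mul_sum]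
      rw [this, sum_sub_distrib, ← mul_sum]
      ring
    have hsummand : ∀ g : ι → Bool,
        (∏ i, (if g i then α else 1 - α)) * Real.exp (t * T g) = ∏ i, f i (g i) := by
      intro g
      rw [harg g, Real.exp_sum, ← prod_mul_distrib]
    rw [Fintype.sum_congr _ _ hsummand]
    rw [← Fintype.prod_sum]
    exact Fintype.prod_congr _ _ fun i => Fintype.sum_bool _
  have step3 : ∀ i, f i true + f i false ≤ Real.exp (t ^ 2 * M ^ 2 / 2) := by
    intro i
    have hu := two_point_mgf α (t * σ * s i) h0 h1
    have e1 : t * σ * (s i * 1 - α * s i) = t * σ * s i * (1 - α) := by ring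
    have e2 : t * σ * (s i * 0 - α * s i) = t * σ * s i * (0 - α) := by ring
    have : f i true + f i false
        = α * Real.exp (t * σ * s i * (1 - α)) + (1 - α) * Real.exp (t * σ * s i * (0 - α)) := by
      simp only [hf, if_true, Bool.false_eq_true, if_false]
      rw [e1, e2]
    rw [this]
    refine hu.trans (Real.exp_le_exp.2 ?_)
    have hsq : s i ^ 2 ≤ M ^ 2 := by
      have := abs_le.mp (hs i)
      nlinarith
    have : (t * σ * s i) ^ 2 = t ^ 2 * s i ^ 2 := by
      rw [mul_pow, mul_pow, hσ2]; ring
    rw [this]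
    nlinarith [sq_nonneg t]
  have step4 : ∏ i, (f i true + f i false) ≤ Real.exp (N * (t ^ 2 * M ^ 2 / 2)) := by
    have hnn : ∀ i ∈ univ, (0:ℝ) ≤ f i true + f i false := by
      intro i _
      have hb : ∀ b, 0 ≤ f i b := by
        intro b
        rw [hf]
        refine mul_nonneg ?_ (Real.exp_nonneg _)
        by_cases h : b <;> simp [h] <;> linarith
      linarith [hb true, hb false]
    calc ∏ i, (f i true + f i false) ≤ ∏ _i : ι, Real.exp (t ^ 2 * M ^ 2 / 2) :=
          prod_le_prod hnn fun i _ => step3 i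
      _ = Real.exp (t ^ 2 * M ^ 2 / 2) ^ (Fintype.card ι) := by rw [prod_const, card_univ]
      _ = Real.exp ((Fintype.card ι : ℝ) * (t ^ 2 * M ^ 2 / 2)) := by
          rw [← Real.exp_nat_mul]
      _ ≤ Real.exp (N * (t ^ 2 * M ^ 2 / 2)) := by
          refine Real.exp_le_exp.2 (mul_le_mul_of_nonneg_right hcard (by positivity))
  calc ∑ g ∈ univ.filter (fun g : ι → Bool => δ * N ≤ T g),
        ∏ i, (if g i then α else 1 - α)
      ≤ Real.exp (-(t * (δ * N))) * ∑ g : ι → Bool,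
        (∏ i, (if g i then α else 1 - α)) * Real.exp (t * T g) := step1
    _ = Real.exp (-(t * (δ * N))) * ∏ i, (f i true + f i false) := by rw [step2]
    _ ≤ Real.exp (-(t * (δ * N))) * Real.exp (N * (t ^ 2 * M ^ 2 / 2)) :=
        mul_le_mul_of_nonneg_left step4 (Real.exp_nonneg _)
    _ = Real.exp (-δ ^ 2 * N / (2 * M ^ 2)) := by
        rw [← Real.exp_add]
        congr 1
        rw [htdef]
        field_simp
        ring

end ClusterColoringAux


noncomputable section ClusterColoringAux2

open Finset

variable {V : Type*} [DecidableEq V] [Fintype V]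

/-- The size of a connected component as a finset cardinality. -/
def csz (ω : Conf V) (C : (graphOf ω).ConnectedComponent) : ℕ :=
  #(univ.filter fun x => (graphOf ω).connectedComponentMk x = C)

lemma cmk_surjective (ω : Conf V) :
    Function.Surjective ((graphOf ω).connectedComponentMk) := fun C => C.exists_rep

lemma sum_csz (ω : Conf V) : ∑ C, csz ω C = Fintype.card V := by
  rw [← card_univ]
  exact (card_eq_sum_card_fiberwise (fun x _ => mem_univ _)).symm

lemma clusterSize_eq (ω : Conf V) (x : V) :
    clusterSize ω x = csz ω ((graphOf ω).connectedComponentMk x) := by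
  rw [clusterSize]
  have hset : {y | (graphOf ω).Reachable x y}
      = {y | (graphOf ω).connectedComponentMk y = (graphOf ω).connectedComponentMk x} := by
    ext y
    simp only [Set.mem_setOf_eq, SimpleGraph.ConnectedComponent.eq]
    exact ⟨fun h => h.symm, fun h => h.symm⟩
  rw [hset, Nat.card_coe_set_eq, Set.ncard_eq_toFinset_card', Set.toFinset_setOf]
  rfl

lemma SMcard_eq (ω : Conf V) (M : ℝ) :
    SMcard ω M = ∑ C ∈ univ.filter (fun C => M < (csz ω C : ℝ)), csz ω C := by
  rw [SMcard]
  have h1 : (univ.filter fun x : V => (clusterSize ω x : ℝ) > M)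
      = univ.filter fun x => M < (csz ω ((graphOf ω).connectedComponentMk x) : ℝ) := by
    refine filter_congr fun x _ => ?_
    rw [clusterSize_eq]
  rw [h1, card_eq_sum_card_fiberwise (f := (graphOf ω).connectedComponentMk)
      (t := univ.filter fun C => M < (csz ω C : ℝ))
      (fun x hx => by
        rw [mem_coe, mem_filter] at hx ⊢
        exact ⟨mem_univ _, hx.2⟩)]
  refine sum_congr rfl fun C hC => ?_
  rw [mem_filter] at hC
  rw [csz]
  congr 1
  ext x
  simp only [mem_filter, mem_univ, true_and]
  constructor
  · rintro ⟨-, h⟩; exact h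
  · intro h; exact ⟨by rw [h]; exact hC.2, h⟩

lemma numClustersIn_eq (ω : Conf V) (g : (graphOf ω).ConnectedComponent → Bool) (b : Bool) :
    numClustersIn ω {x | g ((graphOf ω).connectedComponentMk x) = b}
      = #(univ.filter fun C => g C = b) := by
  rw [numClustersIn]
  have hset : {C : (graphOf ω).ConnectedComponent |
      ∃ x ∈ {x | g ((graphOf ω).connectedComponentMk x) = b},
        (graphOf ω).connectedComponentMk x = C} = {C | g C = b} := by
    ext C
    simp only [Set.mem_setOf_eq]
    constructor
    · rintro ⟨x, hx, rfl⟩; exact hx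
    · intro h
      obtain ⟨x, rfl⟩ := cmk_surjective ω C
      exact ⟨x, h, rfl⟩
  rw [hset, Nat.card_coe_set_eq, Set.ncard_eq_toFinset_card', Set.toFinset_setOf]

lemma constOnClusters_comp (ω : Conf V) (g : (graphOf ω).ConnectedComponent → Bool) :
    constOnClusters ω (fun x => g ((graphOf ω).connectedComponentMk x)) := by
  intro x y h
  simp only
  rw [SimpleGraph.ConnectedComponent.sound h]

lemma colorWeight_comp (ω : Conf V) (α : ℝ) (g : (graphOf ω).ConnectedComponent → Bool) :
    colorWeight ω α (fun x => g ((graphOf ω).connectedComponentMk x))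
      = ∏ C, (if g C then α else 1 - α) := by
  rw [colorWeight, if_pos (constOnClusters_comp ω g)]
  rw [numClustersIn_eq ω g true, numClustersIn_eq ω g false]
  have hcase : ∀ C, (if g C then α else 1 - α)
      = α ^ (if g C then 1 else 0) * (1 - α) ^ (if g C then 0 else 1) := by
    intro C; by_cases h : g C <;> simp [h]
  rw [prod_congr rfl fun C _ => hcase C, prod_mul_distrib,
    prod_pow_eq_pow_sum, prod_pow_eq_pow_sum, card_filter, card_filter]
  congr 2
  refine sum_congr rfl fun C _ => ?_
  by_cases h : g C <;> simp [h]

lemma sum_colorWeight_mul (ω : Conf V) (α : ℝ) (F : (V → Bool) → ℝ) :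
    ∑ c : V → Bool, colorWeight ω α c * F c
    = ∑ g : (graphOf ω).ConnectedComponent → Bool,
        (∏ C, if g C then α else 1 - α) *
          F (fun x => g ((graphOf ω).connectedComponentMk x)) := by
  classical
  set Φ : ((graphOf ω).ConnectedComponent → Bool) → (V → Bool) :=
    fun g x => g ((graphOf ω).connectedComponentMk x) with hΦ
  have hinj : Function.Injective Φ := by
    intro g₁ g₂ h
    funext C
    obtain ⟨x, rfl⟩ := cmk_surjective ω C
    exact congrFun h x
  have himage : ∀ c ∈ (univ : Finset (V → Bool)), c ∉ univ.image Φ →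
      colorWeight ω α c * F c = 0 := by
    intro c _ hc
    rw [colorWeight, if_neg, zero_mul]
    intro hconst
    apply hc
    rw [mem_image]
    refine ⟨fun C => c C.exists_rep.choose, mem_univ _, ?_⟩
    funext x
    have hspec := ((graphOf ω).connectedComponentMk x).exists_rep.choose_spec
    exact hconst _ _ (SimpleGraph.ConnectedComponent.exact hspec)
  calc ∑ c : V → Bool, colorWeight ω α c * F c
      = ∑ c ∈ univ.image Φ, colorWeight ω α c * F c :=
        (sum_subset (subset_univ _) himage).symm
    _ = ∑ g : (graphOf ω).ConnectedComponent → Bool, colorWeight ω α (Φ g) * F (Φ g) :=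
        sum_image fun g₁ _ g₂ _ h => hinj h
    _ = _ := by
        refine Fintype.sum_congr _ _ fun g => ?_
        rw [hΦ, colorWeight_comp]

lemma sum_colorWeight (ω : Conf V) (α : ℝ) : ∑ c : V → Bool, colorWeight ω α c = 1 := by
  have h := sum_colorWeight_mul ω α (fun _ => 1)
  simp only [mul_one] at h
  rw [h, (Fintype.prod_sum (fun (_ : (graphOf ω).ConnectedComponent) (b : Bool) =>
      if b then α else 1 - α)).symm]
  simp [Fintype.sum_bool]

lemma redSet_comp_card (ω : Conf V) (g : (graphOf ω).ConnectedComponent → Bool) :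
    (redSet (fun x => g ((graphOf ω).connectedComponentMk x))).card
      = ∑ C, (if g C then csz ω C else 0) := by
  rw [redSet, card_eq_sum_card_fiberwise (f := (graphOf ω).connectedComponentMk)
      (t := univ) (fun x _ => mem_univ _)]
  refine sum_congr rfl fun C _ => ?_
  by_cases h : g C
  · rw [if_pos h, csz]
    congr 1
    ext x
    simp only [mem_filter, mem_univ, true_and]
    constructor
    · rintro ⟨-, h2⟩; exact h2
    · intro h2; exact ⟨by rw [h2]; exact h, h2⟩
  · rw [if_neg h]
    refine card_eq_zero.2 (filter_eq_empty_iff.2 ?_)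
    intro x hx
    rw [mem_filter] at hx
    intro h2
    exact h (h2 ▸ hx.2)

end ClusterColoringAux2


/-- **Lemma 3.2 (Hoeffding for cluster colorings).** Let `ω` be an edge configuration on `n`
vertices with `|S_M(ω)| ≤ εn`.  Color each cluster of `ω` red independently with probability
`α` and let `R` be the set of red vertices.  Then for every `δ > 0`,
`P(||R| - αn| ≥ (ε+δ)n) ≤ 2 exp(-δ²n/(2M²))`. -/
theorem cluster_coloring_hoeffding (n : ℕ) (ω : Conf (Fin n)) (M ε : ℝ)
    (hM : 0 < M) (hε : 0 < ε) (hS : (SMcard ω M : ℝ) ≤ ε * n)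
    (α : ℝ) (hα : α ∈ Set.Icc (0 : ℝ) 1) (δ : ℝ) (hδ : 0 < δ) :
    probOf (colorWeight ω α) {c | (ε + δ) * n ≤ |((redSet c).card : ℝ) - α * n|}
      ≤ 2 * Real.exp (-δ ^ 2 * n / (2 * M ^ 2)) := by
  classical
  open Finset in
  obtain ⟨hα0, hα1⟩ := hα
  have hn0 : (0:ℝ) ≤ (n:ℝ) := Nat.cast_nonneg n
  set sr : (graphOf ω).ConnectedComponent → ℝ := fun C => (csz ω C : ℝ) with hsr
  set s' : (graphOf ω).ConnectedComponent → ℝ := fun C => if M < sr C then 0 else sr C with hs'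
  set Sb : ℝ := ∑ C ∈ univ.filter (fun C => M < sr C), sr C with hSbdef
  have hsr0 : ∀ C, 0 ≤ sr C := fun C => Nat.cast_nonneg _
  have hsum_sr : ∑ C, sr C = (n:ℝ) := by
    rw [hsr, ← Nat.cast_sum, sum_csz ω, Fintype.card_fin]
  have hSb : Sb ≤ ε * n := by
    have h1 : (SMcard ω M : ℝ) = Sb := by
      rw [hSbdef, SMcard_eq ω M, Nat.cast_sum]
    linarith [hS]
  have hSb0 : 0 ≤ Sb := sum_nonneg fun C _ => hsr0 C
  have hbig : ∀ C, sr C - s' C = (if M < sr C then sr C else 0) := by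
    intro C; by_cases h : M < sr C <;> simp [hs', h]
  have hsum_s' : ∑ C, s' C = (n:ℝ) - Sb := by
    have h2 : ∑ C, (sr C - s' C) = Sb := by
      rw [sum_congr rfl fun C _ => hbig C, hSbdef, sum_filter]
    rw [sum_sub_distrib, hsum_sr] at h2
    linarith
  have habs : ∀ C, |s' C| ≤ M := by
    intro C
    by_cases h : M < sr C
    · rw [hs']; simp only [if_pos h]; simpa using hM.le
    · rw [hs']; simp only [if_neg h]; rw [abs_of_nonneg (hsr0 C)]; exact not_lt.mp h
  have hcard : ((Fintype.card (graphOf ω).ConnectedComponent : ℝ)) ≤ (n:ℝ) := by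
    have h3 := Fintype.card_le_of_surjective _ (cmk_surjective ω)
    rw [Fintype.card_fin] at h3
    exact_mod_cast h3
  have hX : ∀ g : (graphOf ω).ConnectedComponent → Bool,
      ((redSet (fun x => g ((graphOf ω).connectedComponentMk x))).card : ℝ)
        = ∑ C, sr C * (if g C then 1 else 0) := by
    intro g
    rw [redSet_comp_card, Nat.cast_sum]
    exact sum_congr rfl fun C _ => by by_cases h : g C <;> simp [h, hsr]
  have hZbound : ∀ g : (graphOf ω).ConnectedComponent → Bool,
      (∑ C, sr C * (if g C then 1 else 0)) - (∑ C, s' C * (if g C then 1 else 0)) ≤ Sb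
      ∧ 0 ≤ (∑ C, sr C * (if g C then 1 else 0)) - (∑ C, s' C * (if g C then 1 else 0)) := by
    intro g
    rw [← sum_sub_distrib]
    have heach : ∀ C, sr C * (if g C then 1 else 0) - s' C * (if g C then 1 else 0)
        = (if M < sr C then sr C else 0) * (if g C then 1 else 0) := by
      intro C; rw [← sub_mul, hbig C]
    rw [sum_congr rfl fun C _ => heach C]
    constructor
    · have hle : ∑ C, (if M < sr C then sr C else 0) * (if g C then 1 else 0)
          ≤ ∑ C, (if M < sr C then sr C else 0) := by
        refine sum_le_sum fun C _ => ?_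
        by_cases h : g C
        · simp [h]
        · simp only [if_neg h, mul_zero]
          by_cases h2 : M < sr C <;> simp [h2, hsr0 C]
      calc _ ≤ ∑ C, (if M < sr C then sr C else 0) := hle
        _ = Sb := by rw [hSbdef, sum_filter]
    · refine sum_nonneg fun C _ => ?_
      by_cases h : M < sr C <;> by_cases h2 : g C <;> simp [h, h2, hsr0 C]
  have hincl : ∀ g : (graphOf ω).ConnectedComponent → Bool,
      (ε + δ) * (n:ℝ) ≤ |(∑ C, sr C * (if g C then 1 else 0)) - α * n| →
      (δ * (n:ℝ) ≤ 1 * ((∑ C, s' C * (if g C then 1 else 0)) - α * ∑ C, s' C))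
      ∨ (δ * (n:ℝ) ≤ (-1 : ℝ) * ((∑ C, s' C * (if g C then 1 else 0)) - α * ∑ C, s' C)) := by
    intro g hg
    have hαSb0 : 0 ≤ α * Sb := mul_nonneg hα0 hSb0
    have hαSb1 : α * Sb ≤ Sb := mul_le_of_le_one_left hSb0 hα1
    have hz := hZbound g
    have he : α * ∑ C, s' C = α * n - α * Sb := by rw [hsum_s']; ring
    rcases le_abs.mp hg with h | h
    · left; rw [he]; linarith [hz.1, hz.2, hSb]
    · right; rw [he]; linarith [hz.1, hz.2, hSb]
  have hP0 : ∀ g : (graphOf ω).ConnectedComponent → Bool,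
      (0:ℝ) ≤ ∏ C, (if g C then α else 1 - α) :=
    fun g => prod_nonneg fun C _ => by
      by_cases h : g C <;> simp [h] <;> linarith
  simp only [probOf, sum_colorWeight ω α, div_one]
  have e1 : ∑ c ∈ univ.filter
        (· ∈ {c : Fin n → Bool | (ε + δ) * ↑n ≤ |((redSet c).card : ℝ) - α * ↑n|}),
        colorWeight ω α c
      = ∑ c : Fin n → Bool, colorWeight ω α c *
          (if (ε + δ) * (n:ℝ) ≤ |((redSet c).card : ℝ) - α * ↑n| then 1 else 0) := by
    rw [sum_filter]
    refine sum_congr rfl fun c _ => ?_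
    simp only [Set.mem_setOf_eq]
    by_cases h : (ε + δ) * (n:ℝ) ≤ |((redSet c).card : ℝ) - α * ↑n|
    · rw [if_pos h, if_pos h, mul_one]
    · rw [if_neg h, if_neg h, mul_zero]
  rw [e1, sum_colorWeight_mul ω α
    (fun c => if (ε + δ) * (n:ℝ) ≤ |((redSet c).card : ℝ) - α * ↑n| then 1 else 0)]
  have e2 : ∑ g : (graphOf ω).ConnectedComponent → Bool,
        (∏ C, if g C then α else 1 - α) *
        (if (ε + δ) * (n:ℝ) ≤
          |((redSet (fun x => g ((graphOf ω).connectedComponentMk x))).card : ℝ) - α * ↑n|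
          then 1 else 0)
      = ∑ g ∈ univ.filter (fun g : (graphOf ω).ConnectedComponent → Bool =>
          (ε + δ) * (n:ℝ) ≤ |(∑ C, sr C * (if g C then 1 else 0)) - α * ↑n|),
        ∏ C, (if g C then α else 1 - α) := by
    rw [sum_filter]
    refine sum_congr rfl fun g _ => ?_
    rw [hX g]
    by_cases h : (ε + δ) * (n:ℝ) ≤ |(∑ C, sr C * (if g C then 1 else 0)) - α * ↑n|
    · rw [if_pos h, if_pos h, mul_one]
    · rw [if_neg h, if_neg h, mul_zero]
  rw [e2]
  have hsub : univ.filter (fun g : (graphOf ω).ConnectedComponent → Bool =>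
        (ε + δ) * (n:ℝ) ≤ |(∑ C, sr C * (if g C then 1 else 0)) - α * ↑n|)
      ⊆ univ.filter (fun g : (graphOf ω).ConnectedComponent → Bool =>
          δ * (n:ℝ) ≤ 1 * ((∑ C, s' C * (if g C then 1 else 0)) - α * ∑ C, s' C))
        ∪ univ.filter (fun g : (graphOf ω).ConnectedComponent → Bool =>
          δ * (n:ℝ) ≤ (-1 : ℝ) * ((∑ C, s' C * (if g C then 1 else 0)) - α * ∑ C, s' C)) := by
    intro g hg
    rw [mem_filter] at hg
    rcases hincl g hg.2 with h | h
    · exact mem_union_left _ (mem_filter.2 ⟨mem_univ _, h⟩)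
    · exact mem_union_right _ (mem_filter.2 ⟨mem_univ _, h⟩)
  refine le_trans (sum_le_sum_of_subset_of_nonneg hsub fun g _ _ => hP0 g) ?_
  have hunion : ∑ g ∈ (univ.filter (fun g : (graphOf ω).ConnectedComponent → Bool =>
          δ * (n:ℝ) ≤ 1 * ((∑ C, s' C * (if g C then 1 else 0)) - α * ∑ C, s' C))
        ∪ univ.filter (fun g : (graphOf ω).ConnectedComponent → Bool =>
          δ * (n:ℝ) ≤ (-1 : ℝ) * ((∑ C, s' C * (if g C then 1 else 0)) - α * ∑ C, s' C))),
        ∏ C, (if g C then α else 1 - α)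
      ≤ (∑ g ∈ univ.filter (fun g : (graphOf ω).ConnectedComponent → Bool =>
          δ * (n:ℝ) ≤ 1 * ((∑ C, s' C * (if g C then 1 else 0)) - α * ∑ C, s' C)),
          ∏ C, (if g C then α else 1 - α))
        + ∑ g ∈ univ.filter (fun g : (graphOf ω).ConnectedComponent → Bool =>
          δ * (n:ℝ) ≤ (-1 : ℝ) * ((∑ C, s' C * (if g C then 1 else 0)) - α * ∑ C, s' C)),
          ∏ C, (if g C then α else 1 - α) := by
    rw [← sum_union_inter]
    have hnn := sum_nonneg (s := (univ.filter (fun g : (graphOf ω).ConnectedComponent → Bool =>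
          δ * (n:ℝ) ≤ 1 * ((∑ C, s' C * (if g C then 1 else 0)) - α * ∑ C, s' C))
        ∩ univ.filter (fun g : (graphOf ω).ConnectedComponent → Bool =>
          δ * (n:ℝ) ≤ (-1 : ℝ) * ((∑ C, s' C * (if g C then 1 else 0)) - α * ∑ C, s' C))))
      (fun g _ => hP0 g)
    linarith
  refine hunion.trans ?_
  rw [two_mul]
  exact add_le_add
    (bernoulli_chernoff α M δ (n:ℝ) 1 hα0 hα1 hM hδ hn0 hcard s' habs (Or.inl rfl))
    (bernoulli_chernoff α M δ (n:ℝ) (-1) hα0 hα1 hM hδ hn0 hcard s' habs (Or.inr rfl))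
end
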